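/- arXiv:1104.1688 — 4 statements merged into one kernel-verified Lean document; each statement's English description precedes it below -/
import Mathlib

section
/- Let X ≥ 0 be a random variable with E[X^{1/ρ + δ}] < ∞ for some δ > 0 and ρ > 0, and let α be a positive function with α ∈ RV_ρ and α(t) → ∞. Then for every z > 0, lim_{ε→0} limsup_{t→∞} t·P[X/α(t) > z/ε] = 0. -/
open MeasureTheory Filter Topology Set

/-- `f` is regularly varying at infinity with index `ρ`. -/
def RegVar (f : ℝ → ℝ) (ρ : ℝ) : Prop :=
  ∀ x : ℝ, 0 < x → Tendsto (fun t => f (t * x) / f t) atTop (𝓝 (x ^ ρ))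

lemma regvar_ratio_tendsto_zero (α : ℝ → ℝ) (ρ p : ℝ) (hρ : 0 < ρ) (hp : 1 < ρ * p)
    (hαpos : ∀ t, 0 < α t) (hαRV : RegVar α ρ) (hαtop : Tendsto α atTop atTop) :
    Tendsto (fun t => t / α t ^ p) atTop (𝓝 0) := by
  have hppos : 0 < p := by nlinarith
  set γ : ℝ := (ρ + 1 / p) / 2 with hγdef
  have hinvp : 1 / p < ρ := by
    rw [div_lt_iff₀ hppos]; linarith
  have hγρ : γ < ρ := by rw [hγdef]; linarith
  have hγpos : 0 < γ := by
    have : 0 < 1 / p := by positivity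
    rw [hγdef]; linarith
  have hγp : 1 < γ * p := by
    have : γ * p = (ρ * p + 1) / 2 := by
      rw [hγdef]; linear_combination (1/2 : ℝ) * one_div_mul_cancel hppos.ne'
    rw [this]; linarith
  -- eventually α (2 t) ≥ 2^γ * α t
  have h2 : Tendsto (fun t => α (t * 2) / α t) atTop (𝓝 ((2 : ℝ) ^ ρ)) := hαRV 2 (by norm_num)
  have hlt : (2 : ℝ) ^ γ < (2 : ℝ) ^ ρ :=
    Real.rpow_lt_rpow_left_iff (by norm_num) |>.mpr hγρ
  obtain ⟨T, hT⟩ := (h2.eventually (eventually_ge_nhds hlt)).exists_forall_of_atTop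
  obtain ⟨S, hS⟩ := (hαtop.eventually_ge_atTop (1 : ℝ)).exists_forall_of_atTop
  set B : ℝ := max T (max S 1) with hBdef
  have hB1 : (1 : ℝ) ≤ B := le_trans (le_max_right S 1) (le_max_right T _)
  have hBpos : (0 : ℝ) < B := lt_of_lt_of_le one_pos hB1
  have hBT : T ≤ B := le_max_left _ _
  have hBS : S ≤ B := le_trans (le_max_left S 1) (le_max_right T _)
  -- doubling bound
  have hdouble : ∀ t, T ≤ t → (2 : ℝ) ^ γ * α t ≤ α (2 * t) := by
    intro t ht
    have := hT t ht
    rw [le_div_iff₀ (hαpos t)] at this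
    calc (2:ℝ) ^ γ * α t ≤ α (t * 2) := this
    _ = α (2 * t) := by rw [mul_comm]
  -- key lower bound by induction
  have key : ∀ n : ℕ, ∀ t, B ≤ t → t < 2 ^ (n + 1) * B → (t / (2 * B)) ^ γ ≤ α t := by
    intro n
    induction n with
    | zero =>
      intro t ht ht2
      have h2B : (0:ℝ) < 2 * B := by linarith
      have h1 : t / (2 * B) ≤ 1 := by
        rw [div_le_one h2B]
        simpa using ht2.le
      have h0 : 0 ≤ t / (2 * B) := div_nonneg (le_trans hBpos.le ht) h2B.le
      calc (t / (2 * B)) ^ γ ≤ 1 := Real.rpow_le_one h0 h1 hγpos.le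
      _ ≤ α t := hS t (le_trans hBS ht)
    | succ n ih =>
      intro t ht ht2
      by_cases hc : t < 2 ^ (n + 1) * B
      · exact ih t ht hc
      push_neg at hc
      have ht2' : t / 2 < 2 ^ (n + 1) * B := by
        rw [div_lt_iff₀ (by norm_num : (0:ℝ) < 2)]
        calc t < 2 ^ (n + 2) * B := ht2
        _ = 2 ^ (n + 1) * B * 2 := by ring
      have htB : B ≤ t / 2 := by
        rw [le_div_iff₀ (by norm_num : (0:ℝ) < 2)]
        calc B * 2 ≤ 2 ^ (n + 1) * B := by
              have : (2:ℝ) ≤ 2 ^ (n+1) := by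
                calc (2:ℝ) = 2 ^ 1 := (pow_one 2).symm
                _ ≤ 2 ^ (n+1) := pow_le_pow_right₀ (by norm_num) (by omega)
              nlinarith
        _ ≤ t := hc
      have ihh := ih (t / 2) htB ht2'
      have hd := hdouble (t / 2) (le_trans hBT htB)
      rw [mul_div_cancel₀ t (by norm_num : (2:ℝ) ≠ 0)] at hd
      have h2B : (0:ℝ) < 2 * B := by linarith
      have ht2pos : (0:ℝ) ≤ t / 2 / (2 * B) := by
        have : (0:ℝ) ≤ t / 2 := le_trans hBpos.le htB
        exact div_nonneg this h2B.le
      have harg : t / (2 * B) = 2 * (t / 2 / (2 * B)) := by ring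
      calc (t / (2 * B)) ^ γ = (2 * (t / 2 / (2 * B))) ^ γ := by rw [harg]
      _ = 2 ^ γ * (t / 2 / (2 * B)) ^ γ := Real.mul_rpow (by norm_num) ht2pos
      _ ≤ 2 ^ γ * α (t / 2) :=
          mul_le_mul_of_nonneg_left ihh (Real.rpow_nonneg (by norm_num) γ)
      _ ≤ α t := hd
  -- lower bound for all large t
  have lower : ∀ t, B ≤ t → (t / (2 * B)) ^ γ ≤ α t := by
    intro t ht
    obtain ⟨n, hn⟩ := pow_unbounded_of_one_lt (t / B) (by norm_num : (1:ℝ) < 2)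
    refine key n t ht ?_
    calc t = t / B * B := by field_simp
    _ < 2 ^ n * B := by gcongr
    _ ≤ 2 ^ (n + 1) * B := by gcongr <;> [norm_num; omega]
  -- squeeze
  have hmaj : Tendsto (fun t : ℝ => (2 * B) ^ (γ * p) * t ^ (1 - γ * p)) atTop (𝓝 0) := by
    have : Tendsto (fun t : ℝ => t ^ (-(γ * p - 1))) atTop (𝓝 0) :=
      tendsto_rpow_neg_atTop (by linarith)
    have h' := this.const_mul ((2 * B) ^ (γ * p))
    rw [mul_zero] at h'
    refine h'.congr' ?_
    filter_upwards [eventually_gt_atTop (0:ℝ)] with t ht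
    rw [show -(γ * p - 1) = 1 - γ * p by ring]
  apply squeeze_zero' (g := fun t : ℝ => (2 * B) ^ (γ * p) * t ^ (1 - γ * p))
  · filter_upwards [eventually_ge_atTop (0:ℝ)] with t ht
    exact div_nonneg ht (Real.rpow_nonneg (hαpos t).le p)
  · filter_upwards [eventually_ge_atTop B] with t ht
    have htpos : 0 < t := lt_of_lt_of_le hBpos ht
    have h2B : (0:ℝ) < 2 * B := by linarith
    have hq : (0:ℝ) < t / (2 * B) := div_pos htpos h2B
    have h1 : (t / (2 * B)) ^ (γ * p) ≤ α t ^ p := by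
      rw [Real.rpow_mul hq.le]
      exact Real.rpow_le_rpow (Real.rpow_nonneg hq.le γ) (lower t ht) hppos.le
    have hlp : 0 < (t / (2 * B)) ^ (γ * p) := Real.rpow_pos_of_pos hq _
    calc t / α t ^ p ≤ t / (t / (2 * B)) ^ (γ * p) := by
          gcongr
    _ = (2 * B) ^ (γ * p) * t ^ (1 - γ * p) := by
        have h2B : (0:ℝ) < 2 * B := by linarith
        rw [Real.div_rpow htpos.le h2B.le, Real.rpow_sub htpos, Real.rpow_one]
        have h2 : ((2*B) : ℝ) ^ (γ * p) ≠ 0 := ne_of_gt (Real.rpow_pos_of_pos h2B _)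
        have h3 : (t:ℝ) ^ (γ * p) ≠ 0 := ne_of_gt (Real.rpow_pos_of_pos htpos _)
        field_simp
  · exact hmaj
theorem stmt_1 {Ω : Type*} [MeasurableSpace Ω] (P : Measure Ω) [IsProbabilityMeasure P]
    (X : Ω → ℝ) (hXpos : ∀ ω, 0 ≤ X ω)
    (ρ δ : ℝ) (hρ : 0 < ρ) (hδ : 0 < δ)
    (hmom : Integrable (fun ω => X ω ^ (1 / ρ + δ)) P)
    (α : ℝ → ℝ) (hαpos : ∀ t, 0 < α t) (hαRV : RegVar α ρ)
    (hαtop : Tendsto α atTop atTop) :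
    ∀ z : ℝ, 0 < z →
      Tendsto (fun ε : ℝ =>
          Filter.limsup (fun t => t * (P {ω | X ω / α t > z / ε}).toReal) atTop)
        (𝓝[>] (0 : ℝ)) (𝓝 0) := by
  intro z hz
  set p : ℝ := 1 / ρ + δ with hpdef
  have hppos : 0 < p := by positivity
  have hρp : 1 < ρ * p := by
    have : ρ * p = 1 + ρ * δ := by rw [hpdef]; linear_combination mul_one_div_cancel hρ.ne'
    nlinarith
  set M : ℝ := ∫ ω, X ω ^ p ∂P with hMdef
  have hMnn : 0 ≤ M := integral_nonneg fun ω => Real.rpow_nonneg (hXpos ω) p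
  have hratio := regvar_ratio_tendsto_zero α ρ p hρ hρp hαpos hαRV hαtop
  have hconst : ∀ ε : ℝ, 0 < ε →
      Filter.limsup (fun t => t * (P {ω | X ω / α t > z / ε}).toReal) atTop = 0 := by
    intro ε hε
    set a : ℝ := z / ε with hadef
    have hapos : 0 < a := div_pos hz hε
    have htends : Tendsto (fun t => t * (P {ω | X ω / α t > a}).toReal) atTop (𝓝 0) := by
      have hmaj : Tendsto (fun t : ℝ => (M / a ^ p) * (t / α t ^ p)) atTop (𝓝 0) := by
        have := hratio.const_mul (M / a ^ p)
        rwa [mul_zero] at this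
      apply squeeze_zero' (g := fun t : ℝ => (M / a ^ p) * (t / α t ^ p))
      · filter_upwards [eventually_ge_atTop (0:ℝ)] with t ht
        exact mul_nonneg ht ENNReal.toReal_nonneg
      · filter_upwards [eventually_ge_atTop (0:ℝ)] with t ht
        have hαt := hαpos t
        have haα : 0 < a * α t := mul_pos hapos hαt
        -- containment
        have hsub : {ω | X ω / α t > a} ⊆ {ω | (a * α t) ^ p ≤ X ω ^ p} := by
          intro ω hω
          have h1 : a * α t < X ω := by
            rw [Set.mem_setOf_eq, gt_iff_lt, lt_div_iff₀ hαt] at hω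
            exact hω
          exact Real.rpow_le_rpow haα.le h1.le hppos.le
        have hmarkov := mul_meas_ge_le_integral_of_nonneg
          (ae_of_all P fun ω => Real.rpow_nonneg (hXpos ω) p) hmom ((a * α t) ^ p)
        have hPle : (P {ω | X ω / α t > a}).toReal ≤ (P {ω | (a * α t) ^ p ≤ X ω ^ p}).toReal :=
          ENNReal.toReal_mono (measure_ne_top P _) (measure_mono hsub)
        have happ : 0 < (a * α t) ^ p := Real.rpow_pos_of_pos haα p
        have h2 : (P {ω | (a * α t) ^ p ≤ X ω ^ p}).toReal ≤ M / (a * α t) ^ p := by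
          rw [le_div_iff₀ happ, mul_comm]
          exact hmarkov
        calc t * (P {ω | X ω / α t > a}).toReal
            ≤ t * (M / (a * α t) ^ p) := by
              exact mul_le_mul_of_nonneg_left (hPle.trans h2) ht
          _ = (M / a ^ p) * (t / α t ^ p) := by
              rw [Real.mul_rpow hapos.le hαt.le]
              have h4 : (0:ℝ) < a ^ p := Real.rpow_pos_of_pos hapos p
              have h5 : (0:ℝ) < α t ^ p := Real.rpow_pos_of_pos hαt p
              field_simp
      · exact hmaj
    exact htends.limsup_eq
  have heq : (fun ε : ℝ =>
      Filter.limsup (fun t => t * (P {ω | X ω / α t > z / ε}).toReal) atTop)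
      =ᶠ[𝓝[>] (0:ℝ)] fun _ => (0:ℝ) := by
    filter_upwards [self_mem_nhdsWithin] with ε hε
    exact hconst ε hε
  exact Tendsto.congr' heq.symm tendsto_const_nhds
end

section
/- Let ρ < 0, γ < 0 and let (X̃, Ỹ) be random variables with X̃ ≥ 1, Ỹ ≥ 1, satisfying t·P[(X̃/α̃(t), Ỹ/ã(t)) ∈ ·] → μ vaguely on [0,∞] × (0,∞], where α̃ ∈ RV_{-ρ}, ã ∈ RV_{-γ} (both tending to ∞), μ nondegenerate Radon, and t·P[Ỹ/ã(t) > y] → y^{1/γ} for y > 0. If E[X̃^{1/|γ| + δ}] < ∞ for some δ > 0, then (X̃Ỹ, X̃ + Ỹ - 1), scaled by (α̃(t)ã(t), ã(t)), satisfies t·P[(X̃Ỹ/(α̃(t)ã(t)), (X̃+Ỹ-1)/ã(t)) ∈ ·] → μ∘T₂⁻¹ vaguely on [0,∞] × (0,∞], where T₂(x,y) = (xy, y). -/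
open MeasureTheory Filter Topology Set

/-- Vague convergence of `t ↦ t · P[Z t ∈ ·]` to `μ` on the cone
`[0,∞] × (0,∞]`, tested on continuity sets bounded away from `{y = 0}`. -/
def VagueConvCone {Ω : Type*} [MeasurableSpace Ω] (P : Measure Ω)
    (Z : ℝ → Ω → ℝ × ℝ) (μ : Measure (ℝ × ℝ)) : Prop :=
  ∀ B : Set (ℝ × ℝ), MeasurableSet B → (∃ z > 0, B ⊆ {p | z < p.2}) →
    μ (frontier B) = 0 →
    Tendsto (fun t => t * (P {ω | Z t ω ∈ B}).toReal) atTop (𝓝 ((μ B).toReal))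

/-- `μ` is a Radon measure on the cone: finite on sets bounded away from `{y = 0}`. -/
def RadonCone (μ : Measure (ℝ × ℝ)) : Prop := ∀ z : ℝ, 0 < z → μ {p | z < p.2} < ⊤

open Metric

lemma aux_growth {c p : ℝ} (hc : 0 < c) (hp : 1 / c < p) (a : ℝ → ℝ)
    (hapos : ∀ t, 0 < a t)
    (hratio : Tendsto (fun t => a (t * 2) / a t) atTop (𝓝 ((2 : ℝ) ^ c)))
    (hatop : Tendsto a atTop atTop) :
    Tendsto (fun t => t / a t ^ p) atTop (𝓝 0) := by
  have hp0 : 0 < p := lt_trans (by positivity) hp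
  have h1pc : 1 / p < c := by
    rw [div_lt_iff₀ hc] at hp
    rw [div_lt_iff₀ hp0]
    nlinarith
  set r : ℝ := (1 / p + c) / 2 with hr
  have hr1 : 1 / p < r := by rw [hr]; linarith
  have hr2 : r < c := by rw [hr]; linarith
  have hr0 : 0 < r := lt_trans (by positivity) hr1
  have hrp : 1 < r * p := by
    rw [div_lt_iff₀ hp0] at hr1; linarith
  have h2r : (2 : ℝ) ^ r < 2 ^ c :=
    (Real.rpow_lt_rpow_left_iff (by norm_num : (1 : ℝ) < 2)).mpr hr2
  obtain ⟨T₀, hT₀⟩ := eventually_atTop.mp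
    ((hratio.eventually_const_lt h2r).and (hatop.eventually_ge_atTop 1))
  set T : ℝ := max T₀ 1 with hTdef
  have hT1 : (1 : ℝ) ≤ T := le_max_right _ _
  have hT : ∀ t, T ≤ t → (2 : ℝ) ^ r < a (t * 2) / a t ∧ 1 ≤ a t :=
    fun t ht => hT₀ t (le_trans (le_max_left _ _) ht)
  have hTpos : (0 : ℝ) < T := lt_of_lt_of_le one_pos hT1
  have key : ∀ n : ℕ, ∀ u : ℝ, T ≤ u → ((2 : ℝ) ^ r) ^ n ≤ a (u * 2 ^ n) := by
    intro n
    induction n with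
    | zero => intro u hu; simpa using (hT u hu).2
    | succ n ih =>
      intro u hu
      have hun : T ≤ u * 2 ^ n := by
        calc T ≤ u := hu
        _ ≤ u * 2 ^ n := le_mul_of_one_le_right (by linarith [hT1.trans hu]) (one_le_pow₀ (by norm_num))
      have h1 := (hT _ hun).1
      have h2 : a ((u * 2 ^ n) * 2) > 2 ^ r * a (u * 2 ^ n) := by
        rw [gt_iff_lt, ← lt_div_iff₀ (hapos _)]
        exact h1
      have harg : u * 2 ^ (n + 1) = (u * 2 ^ n) * 2 := by ring
      rw [harg, pow_succ, mul_comm (((2:ℝ)^r)^n) (2^r)]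
      calc (2:ℝ) ^ r * (2 ^ r) ^ n ≤ 2 ^ r * a (u * 2 ^ n) := by
            have h2rpos : (0:ℝ) < 2 ^ r := Real.rpow_pos_of_pos (by norm_num) r
            exact mul_le_mul_of_nonneg_left (ih u hu) h2rpos.le
        _ ≤ a ((u * 2 ^ n) * 2) := h2.le
  have hbound : ∀ s : ℝ, T ≤ s → (s / (2 * T)) ^ r ≤ a s := by
    intro s hs
    have hspos : 0 < s := lt_of_lt_of_le hTpos hs
    set n : ℕ := ⌊Real.logb 2 (s / T)⌋₊ with hn
    have hsT : 1 ≤ s / T := (one_le_div hTpos).mpr hs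
    have hlog0 : 0 ≤ Real.logb 2 (s / T) := Real.logb_nonneg (by norm_num) hsT
    have h2n : (2 : ℝ) ^ (n : ℕ) ≤ s / T := by
      have : ((2 : ℝ) ^ (n : ℝ)) ≤ 2 ^ Real.logb 2 (s / T) :=
        Real.rpow_le_rpow_left_iff (by norm_num : (1:ℝ) < 2) |>.mpr (Nat.floor_le hlog0)
      rwa [Real.rpow_natCast, Real.rpow_logb (by positivity) (by norm_num) (by positivity)] at this
    have h2n' : s / T < (2 : ℝ) ^ (n + 1 : ℕ) := by
      have h1 : Real.logb 2 (s / T) < (n : ℝ) + 1 := Nat.lt_floor_add_one _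
      have : (2 : ℝ) ^ Real.logb 2 (s / T) < 2 ^ ((n : ℝ) + 1) :=
        (Real.rpow_lt_rpow_left_iff (by norm_num : (1:ℝ) < 2)).mpr h1
      rw [Real.rpow_logb (by positivity) (by norm_num) (by positivity)] at this
      rwa [show ((n : ℝ) + 1) = ((n + 1 : ℕ) : ℝ) by push_cast; ring, Real.rpow_natCast] at this
    have h2npos : (0 : ℝ) < 2 ^ n := by positivity
    have hTu : T ≤ s / 2 ^ n := by
      rw [le_div_iff₀ h2npos]
      calc T * 2 ^ n = 2 ^ n * T := by ring
        _ ≤ s := by rw [← le_div_iff₀ hTpos]; exact h2n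
    have hkey := key n (s / 2 ^ n) hTu
    rw [div_mul_cancel₀ _ (ne_of_gt h2npos)] at hkey
    calc (s / (2 * T)) ^ r ≤ ((2 : ℝ) ^ n) ^ r := by
          apply Real.rpow_le_rpow (by positivity) _ hr0.le
          rw [div_le_iff₀ (by positivity)]
          calc s = (s / T) * T := by field_simp
            _ ≤ (2 : ℝ) ^ (n + 1 : ℕ) * T := by
                exact mul_le_mul_of_nonneg_right h2n'.le hTpos.le
            _ = 2 ^ n * (2 * T) := by rw [pow_succ]; ring
      _ = ((2 : ℝ) ^ r) ^ n := by
          rw [← Real.rpow_natCast (2:ℝ) n, ← Real.rpow_natCast ((2:ℝ)^r) n,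
            ← Real.rpow_mul (by norm_num : (0:ℝ) ≤ 2), ← Real.rpow_mul (by norm_num : (0:ℝ) ≤ 2),
            mul_comm]
      _ ≤ a s := hkey
  -- squeeze
  have hg : Tendsto (fun s : ℝ => (2 * T) ^ (r * p) * s ^ (1 - r * p)) atTop (𝓝 0) := by
    have h1 : Tendsto (fun s : ℝ => s ^ (-(r * p - 1))) atTop (𝓝 0) :=
      tendsto_rpow_neg_atTop (by linarith)
    have h2 := h1.const_mul ((2 * T) ^ (r * p))
    rw [mul_zero] at h2
    convert h2 using 2 with s
    ring_nf
  apply squeeze_zero' (g := fun s : ℝ => (2 * T) ^ (r * p) * s ^ (1 - r * p))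
  · filter_upwards [eventually_ge_atTop (0:ℝ)] with s hs
    exact div_nonneg hs (Real.rpow_nonneg (hapos s).le p)
  · filter_upwards [eventually_ge_atTop T] with s hs
    have hspos : 0 < s := lt_of_lt_of_le hTpos hs
    have hb := hbound s hs
    have hbase : (0:ℝ) < s / (2 * T) := by positivity
    have hap : ((s / (2 * T)) ^ r) ^ p ≤ a s ^ p :=
      Real.rpow_le_rpow (by positivity) hb hp0.le
    have heq : ((s / (2 * T)) ^ r) ^ p = (s / (2 * T)) ^ (r * p) := by
      rw [← Real.rpow_mul hbase.le]
    rw [heq] at hap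
    have hdenpos : (0:ℝ) < (s / (2 * T)) ^ (r * p) := Real.rpow_pos_of_pos hbase _
    calc s / a s ^ p ≤ s / (s / (2 * T)) ^ (r * p) :=
          div_le_div_of_nonneg_left hspos.le hdenpos hap
      _ = (2 * T) ^ (r * p) * s ^ (1 - r * p) := by
          rw [Real.div_rpow hspos.le (by positivity : (0:ℝ) ≤ 2 * T),
            div_div_eq_mul_div, Real.rpow_sub hspos, Real.rpow_one]
          ring
  · exact hg

lemma aux_markov {Ω : Type*} [MeasurableSpace Ω] (P : Measure Ω) [IsProbabilityMeasure P]
    (X : Ω → ℝ) (hX : ∀ ω, 1 ≤ X ω) {p : ℝ} (hp : 0 < p)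
    (hmom : Integrable (fun ω => X ω ^ p) P)
    (a : ℝ → ℝ) (hapos : ∀ t, 0 < a t)
    (hgrow : Tendsto (fun t => t / a t ^ p) atTop (𝓝 0))
    {ε : ℝ} (hε : 0 < ε) :
    Tendsto (fun t => t * (P {ω | ε < (X ω - 1) / a t}).toReal) atTop (𝓝 0) := by
  set M : ℝ := ∫ ω, X ω ^ p ∂P with hM
  have hg : Tendsto (fun t : ℝ => (M / ε ^ p) * (t / a t ^ p)) atTop (𝓝 0) := by
    have := hgrow.const_mul (M / ε ^ p)
    rwa [mul_zero] at this
  apply squeeze_zero' (g := fun t : ℝ => (M / ε ^ p) * (t / a t ^ p)) _ _ hg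
  · filter_upwards [eventually_ge_atTop (0:ℝ)] with t ht
    exact mul_nonneg ht ENNReal.toReal_nonneg
  · filter_upwards [eventually_ge_atTop (0:ℝ)] with t ht
    have hεa : 0 < ε * a t := mul_pos hε (hapos t)
    have hsub : {ω | ε < (X ω - 1) / a t} ⊆ {ω | (ε * a t) ^ p ≤ X ω ^ p} := by
      intro ω hω
      simp only [mem_setOf_eq] at *
      rw [lt_div_iff₀ (hapos t)] at hω
      exact Real.rpow_le_rpow hεa.le (by linarith) hp.le
    have hmarkov := mul_meas_ge_le_integral_of_nonneg
      (ae_of_all P fun ω => Real.rpow_nonneg (by linarith [hX ω]) p) hmom ((ε * a t) ^ p)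
    have hεap : 0 < (ε * a t) ^ p := Real.rpow_pos_of_pos hεa p
    have h1 : (P {ω | ε < (X ω - 1) / a t}).toReal ≤ M / (ε * a t) ^ p := by
      have h2 : (P {ω | ε < (X ω - 1) / a t}).toReal
          ≤ (P {ω | (ε * a t) ^ p ≤ X ω ^ p}).toReal :=
        ENNReal.toReal_mono (measure_ne_top _ _) (measure_mono hsub)
      have h3 : (P {ω | (ε * a t) ^ p ≤ X ω ^ p}).toReal ≤ M / (ε * a t) ^ p := by
        rw [le_div_iff₀ hεap]
        calc (P {ω | (ε * a t) ^ p ≤ X ω ^ p}).toReal * (ε * a t) ^ p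
            = (ε * a t) ^ p * (P {ω | (ε * a t) ^ p ≤ X ω ^ p}).toReal := by ring
          _ ≤ M := hmarkov
      linarith
    calc t * (P {ω | ε < (X ω - 1) / a t}).toReal ≤ t * (M / (ε * a t) ^ p) :=
          mul_le_mul_of_nonneg_left h1 ht
      _ = (M / ε ^ p) * (t / a t ^ p) := by
          rw [Real.mul_rpow hε.le (hapos t).le]
          have h4 : (0:ℝ) < ε ^ p := Real.rpow_pos_of_pos hε p
          have h5 : (0:ℝ) < a t ^ p := Real.rpow_pos_of_pos (hapos t) p
          field_simp



theorem stmt_5 {Ω : Type*} [MeasurableSpace Ω] (P : Measure Ω) [IsProbabilityMeasure P]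
    (Xt Yt : Ω → ℝ) (hXt : ∀ ω, 1 ≤ Xt ω) (hYt : ∀ ω, 1 ≤ Yt ω)
    (ρ γ δ : ℝ) (hρ : ρ < 0) (hγ : γ < 0) (hδ : 0 < δ)
    (αt at' : ℝ → ℝ) (hαpos : ∀ t, 0 < αt t) (hapos : ∀ t, 0 < at' t)
    (hαRV : RegVar αt (-ρ)) (haRV : RegVar at' (-γ))
    (hαtop : Tendsto αt atTop atTop) (hatop : Tendsto at' atTop atTop)
    (μ : Measure (ℝ × ℝ)) (hRadon : RadonCone μ) (hμ : μ ≠ 0)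
    (hconv : VagueConvCone P (fun t ω => (Xt ω / αt t, Yt ω / at' t)) μ)
    (hYtail : ∀ y : ℝ, 0 < y →
      Tendsto (fun t => t * (P {ω | Yt ω / at' t > y}).toReal) atTop (𝓝 (y ^ (1 / γ))))
    (hmom : Integrable (fun ω => Xt ω ^ (1 / |γ| + δ)) P) :
    VagueConvCone P
      (fun t ω => (Xt ω * Yt ω / (αt t * at' t), (Xt ω + Yt ω - 1) / at' t))
      (Measure.map (fun p : ℝ × ℝ => (p.1 * p.2, p.2)) μ) := by
  intro B hB hBaway hBfr
  obtain ⟨z, hz, hBz⟩ := hBaway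
  classical
  set T₂ : ℝ × ℝ → ℝ × ℝ := fun p => (p.1 * p.2, p.2) with hT₂def
  set ν : Measure (ℝ × ℝ) := Measure.map T₂ μ with hνdef
  have hT₂cont : Continuous T₂ := (continuous_fst.mul continuous_snd).prodMk continuous_snd
  have hT₂meas : Measurable T₂ := hT₂cont.measurable
  have hνapp : ∀ E : Set (ℝ × ℝ), MeasurableSet E → ν E = μ (T₂ ⁻¹' E) := fun E hE =>
    Measure.map_apply hT₂meas hE
  have hsnd : ∀ s : ℝ, MeasurableSet {p : ℝ × ℝ | s < p.2} := fun s =>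
    (isOpen_lt continuous_const continuous_snd).measurableSet
  have hνfin : ∀ s : ℝ, 0 < s → ν {p : ℝ × ℝ | s < p.2} < ⊤ := by
    intro s hs
    rw [hνapp _ (hsnd s), show T₂ ⁻¹' {p : ℝ × ℝ | s < p.2} = {p : ℝ × ℝ | s < p.2} from rfl]
    exact hRadon s hs
  -- the key transfer lemma
  have key : ∀ E : Set (ℝ × ℝ), MeasurableSet E → (E ⊆ {p : ℝ × ℝ | z/2 < p.2}) →
      ν (frontier E) = 0 →
      Tendsto (fun t => t * (P {ω | ((Xt ω / αt t) * (Yt ω / at' t), Yt ω / at' t) ∈ E}).toReal)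
        atTop (𝓝 ((ν E).toReal)) := by
    intro E hE hEz hEfr
    have h0 : μ (T₂ ⁻¹' frontier E) = 0 := by
      rw [← hνapp _ isClosed_frontier.measurableSet]; exact hEfr
    have hfr : μ (frontier (T₂ ⁻¹' E)) = 0 :=
      measure_mono_null (hT₂cont.frontier_preimage_subset E) h0
    have := hconv (T₂ ⁻¹' E) (hT₂meas hE)
      ⟨z/2, by linarith, fun p hp => by have h := hEz (mem_preimage.mp hp); exact h⟩ hfr
    rw [← hνapp _ hE] at this
    exact this
  -- second coordinate bound for cthickenings of B
  have hcsnd : ∀ ε : ℝ, 0 ≤ ε → cthickening ε B ⊆ {p : ℝ × ℝ | z - ε ≤ p.2} := by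
    intro ε hε q hq
    rw [mem_cthickening_iff] at hq
    by_contra hcon
    rw [mem_setOf_eq, not_le] at hcon
    have hlow : ENNReal.ofReal (z - q.2) ≤ EMetric.infEdist q B := by
      rw [EMetric.infEdist, EMetric.le_infEdist]
      intro b hb
      rw [edist_dist]
      apply ENNReal.ofReal_le_ofReal
      have h1 : z < b.2 := hBz hb
      calc z - q.2 ≤ b.2 - q.2 := by linarith
        _ ≤ |b.2 - q.2| := le_abs_self _
        _ = dist q.2 b.2 := by rw [Real.dist_eq, abs_sub_comm]
        _ ≤ dist q b := by rw [Prod.dist_eq]; exact le_max_right _ _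
    have h2 := (ENNReal.ofReal_le_ofReal_iff hε).mp (le_trans hlow hq)
    linarith
  have hzpos4 : (0:ℝ) < z/4 := by linarith
  set S : Set (ℝ × ℝ) := {p : ℝ × ℝ | z/4 < p.2} with hSdef
  have hSmeas : MeasurableSet S := hsnd (z/4)
  have hSfin : ν S ≠ ⊤ := (hνfin _ hzpos4).ne
  have hBS : B ⊆ S := fun p hp => lt_trans (show z/4 < z by linarith) (hBz hp)
  have hνB_ne : ν B ≠ ⊤ := ((measure_mono hBS).trans_lt (hνfin _ hzpos4)).ne
  have hclosureB : ν (closure B) = ν B := by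
    apply le_antisymm _ (measure_mono subset_closure)
    calc ν (closure B) ≤ ν (B ∪ frontier B) := by
          apply measure_mono; rw [← closure_eq_self_union_frontier]
      _ ≤ ν B + ν (frontier B) := measure_union_le _ _
      _ = ν B := by rw [hBfr, add_zero]
  have hintB : ν (interior B) = ν B := by
    apply le_antisymm (measure_mono interior_subset)
    calc ν B ≤ ν (interior B ∪ frontier B) := by
          apply measure_mono
          intro p hp
          rw [← closure_eq_interior_union_frontier]
          exact subset_closure hp
      _ ≤ ν (interior B) + ν (frontier B) := measure_union_le _ _
      _ = ν (interior B) := by rw [hBfr, add_zero]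
  -- Markov/growth based negligibility of the perturbation
  have hW : ∀ ε : ℝ, 0 < ε →
      Tendsto (fun t => t * (P {ω | ε < (Xt ω - 1) / at' t}).toReal) atTop (𝓝 0) := by
    intro ε hε
    have hgabs : |γ| = -γ := abs_of_neg hγ
    have hγpos : 0 < -γ := by linarith
    have hppos : 0 < 1 / |γ| + δ := by positivity
    have hp : 1 / (-γ) < 1 / |γ| + δ := by rw [hgabs]; linarith
    exact aux_markov P Xt hXt hppos hmom at' hapos
      (aux_growth hγpos hp at' hapos (haRV 2 (by norm_num)) hatop) hε
  -- countable bad sets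
  have hfinrestr : IsFiniteMeasure (ν.restrict S) :=
    ⟨by rw [Measure.restrict_apply_univ]; exact lt_top_iff_ne_top.mpr hSfin⟩
  have hmeasK : Measurable fun p : ℝ × ℝ => (EMetric.infEdist p B).toReal :=
    ENNReal.measurable_toReal.comp measurable_infEdist
  have hmeasO : Measurable fun p : ℝ × ℝ => (EMetric.infEdist p Bᶜ).toReal :=
    ENNReal.measurable_toReal.comp measurable_infEdist
  set badK : Set ℝ :=
    {x : ℝ | 0 < ν.restrict S {p : ℝ × ℝ | (EMetric.infEdist p B).toReal = x}} with hbadKdef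
  set badO : Set ℝ :=
    {x : ℝ | 0 < ν.restrict S {p : ℝ × ℝ | (EMetric.infEdist p Bᶜ).toReal = x}} with hbadOdef
  have hbadK : badK.Countable := Measure.countable_meas_level_set_pos hmeasK
  have hbadO : badO.Countable := Measure.countable_meas_level_set_pos hmeasO
  have hfrK : ∀ ε : ℝ, 0 < ε → ε < z/2 → ε ∉ badK →
      ν (frontier (cthickening ε B)) = 0 := by
    intro ε hε hεz hεbad
    rw [hbadKdef, mem_setOf_eq, not_lt, le_zero_iff] at hεbad
    have hsub : frontier (cthickening ε B)
        ⊆ {p : ℝ × ℝ | (EMetric.infEdist p B).toReal = ε} ∩ S := by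
      intro p hp
      have h1 : EMetric.infEdist p B = ENNReal.ofReal ε := frontier_cthickening_subset B hp
      refine ⟨by rw [mem_setOf_eq, h1, ENNReal.toReal_ofReal hε.le], ?_⟩
      have hpc : p ∈ cthickening ε B := isClosed_cthickening.frontier_subset hp
      have := hcsnd ε hε.le hpc
      rw [mem_setOf_eq] at this ⊢
      linarith
    refine le_antisymm ?_ zero_le
    calc ν (frontier (cthickening ε B))
        ≤ ν ({p : ℝ × ℝ | (EMetric.infEdist p B).toReal = ε} ∩ S) := measure_mono hsub
      _ = ν.restrict S {p : ℝ × ℝ | (EMetric.infEdist p B).toReal = ε} :=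
          (Measure.restrict_apply' hSmeas).symm
      _ = 0 := hεbad
  have hfrO : ∀ ε : ℝ, 0 < ε → ε ∉ badO →
      ν (frontier (cthickening ε Bᶜ)ᶜ) = 0 := by
    intro ε hε hεbad
    rw [hbadOdef, mem_setOf_eq, not_lt, le_zero_iff] at hεbad
    have hsub : frontier (cthickening ε Bᶜ)ᶜ
        ⊆ {p : ℝ × ℝ | (EMetric.infEdist p Bᶜ).toReal = ε} ∩ S := by
      rw [frontier_compl]
      intro p hp
      have h1 : EMetric.infEdist p Bᶜ = ENNReal.ofReal ε := frontier_cthickening_subset Bᶜ hp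
      refine ⟨by rw [mem_setOf_eq, h1, ENNReal.toReal_ofReal hε.le], ?_⟩
      have hpB : p ∈ B := by
        by_contra hpB
        have h2 : EMetric.infEdist p Bᶜ = 0 := EMetric.infEdist_zero_of_mem hpB
        rw [h2] at h1
        have : ε ≤ 0 := ENNReal.ofReal_eq_zero.mp h1.symm
        linarith
      exact hBS hpB
    refine le_antisymm ?_ zero_le
    calc ν (frontier (cthickening ε Bᶜ)ᶜ)
        ≤ ν ({p : ℝ × ℝ | (EMetric.infEdist p Bᶜ).toReal = ε} ∩ S) := measure_mono hsub
      _ = ν.restrict S {p : ℝ × ℝ | (EMetric.infEdist p Bᶜ).toReal = ε} :=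
          (Measure.restrict_apply' hSmeas).symm
      _ = 0 := hεbad
  -- the final limit via ε-approximation
  rw [Metric.tendsto_nhds]
  intro η hη
  -- step A: outer approximation by closed thickenings
  have htendK : Tendsto (fun r => ν (cthickening r B)) (𝓝 0) (𝓝 (ν B)) := by
    have hfin : ν (cthickening (z/2) B) ≠ ⊤ := by
      refine ((measure_mono ?_).trans_lt (hνfin _ hzpos4)).ne
      intro p hp
      have := hcsnd (z/2) (by linarith) hp
      rw [mem_setOf_eq] at this ⊢
      linarith
    have := tendsto_measure_cthickening (μ := ν) (s := B) ⟨z/2, by linarith, hfin⟩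
    rwa [hclosureB] at this
  have hlt : ν B < ν B + ENNReal.ofReal (η/2) := by
    apply ENNReal.lt_add_right hνB_ne
    rw [ne_eq, ENNReal.ofReal_eq_zero, not_le]
    linarith
  obtain ⟨ε₁, hε₁pos, hε₁⟩ := Metric.eventually_nhds_iff.mp (htendK.eventually_lt_const hlt)
  -- step B: inner approximation by open "anti-thickenings"
  set O : ℕ → Set (ℝ × ℝ) := fun n => (cthickening (1/(n+1) : ℝ) Bᶜ)ᶜ with hOdef
  have hOmono : Monotone O := by
    intro m n hmn
    apply compl_subset_compl.mpr
    apply cthickening_mono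
    apply one_div_le_one_div_of_le (by positivity)
    have : (m : ℝ) ≤ n := Nat.cast_le.mpr hmn
    linarith
  have hOB : ∀ n, O n ⊆ B := by
    intro n p hp
    by_contra hpB
    exact hp (self_subset_cthickening _ hpB)
  have hiUnion : interior B ⊆ ⋃ n, O n := by
    intro p hp
    obtain ⟨r, hr, hball⟩ := Metric.isOpen_iff.mp isOpen_interior p hp
    obtain ⟨n, hn⟩ := exists_nat_one_div_lt hr
    refine mem_iUnion.mpr ⟨n, ?_⟩
    intro hcon
    rw [mem_cthickening_iff] at hcon
    have hge : ENNReal.ofReal r ≤ EMetric.infEdist p Bᶜ := by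
      rw [EMetric.infEdist, EMetric.le_infEdist]
      intro q hq
      rw [edist_dist]
      apply ENNReal.ofReal_le_ofReal
      by_contra hd
      rw [not_le] at hd
      exact hq (interior_subset (hball (by rwa [Metric.mem_ball, dist_comm])))
    have := le_trans hge hcon
    rw [ENNReal.ofReal_le_ofReal_iff (by positivity)] at this
    linarith
  have hUB : ν (⋃ n, O n) = ν B := by
    apply le_antisymm (measure_mono (iUnion_subset hOB))
    rw [← hintB]
    exact measure_mono hiUnion
  have hνO : Tendsto (fun n => (ν (O n)).toReal) atTop (𝓝 (ν B).toReal) := by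
    have h1 : Tendsto (fun n => ν (O n)) atTop (𝓝 (ν B)) := by
      have := tendsto_measure_iUnion_atTop (μ := ν) hOmono
      rwa [hUB] at this
    exact (ENNReal.tendsto_toReal hνB_ne).comp h1
  obtain ⟨n₀, hn₀⟩ :=
    (hνO.eventually_const_lt (show (ν B).toReal - η/2 < (ν B).toReal by linarith)).exists
  -- choose a good ε
  set b : ℝ := min (z/2) (min ((1:ℝ)/(n₀+1)) ε₁) with hbdef
  have hbpos : 0 < b := lt_min (by linarith) (lt_min (by positivity) hε₁pos)
  have hbadsub : ¬ (Ioo (0:ℝ) b ⊆ badK ∪ badO) := by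
    intro hsub
    have h1 := measure_mono (μ := volume) hsub
    rw [(hbadK.union hbadO).measure_zero volume] at h1
    rw [Real.volume_Ioo, nonpos_iff_eq_zero, ENNReal.ofReal_eq_zero] at h1
    linarith
  obtain ⟨ε, hεIoo, hεbad⟩ := not_subset.mp hbadsub
  obtain ⟨hεpos, hεb⟩ := hεIoo
  have hεz : ε < z/2 := lt_of_lt_of_le hεb (min_le_left _ _)
  have hεn₀ : ε ≤ 1/(n₀+1) := le_of_lt (lt_of_lt_of_le hεb ((min_le_right _ _).trans (min_le_left _ _)))
  have hεε₁ : ε < ε₁ := lt_of_lt_of_le hεb ((min_le_right _ _).trans (min_le_right _ _))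
  have hεbadK : ε ∉ badK := fun h => hεbad (Or.inl h)
  have hεbadO : ε ∉ badO := fun h => hεbad (Or.inr h)
  set Kε : Set (ℝ × ℝ) := cthickening ε B with hKdef
  set Oε : Set (ℝ × ℝ) := (cthickening ε Bᶜ)ᶜ with hOεdef
  have hOεB : Oε ⊆ B := by
    intro p hp
    by_contra hpB
    exact hp (self_subset_cthickening _ hpB)
  have hKS : Kε ⊆ S := by
    intro p hp
    have := hcsnd ε hεpos.le hp
    rw [mem_setOf_eq] at this ⊢
    linarith
  have hKν_ne : ν Kε ≠ ⊤ := ((measure_mono hKS).trans_lt (hνfin _ hzpos4)).ne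
  have hOν_ne : ν Oε ≠ ⊤ := ((measure_mono (hOεB.trans hBS)).trans_lt (hνfin _ hzpos4)).ne
  have hKlt : (ν Kε).toReal < (ν B).toReal + η/2 := by
    have h1 : ν Kε < ν B + ENNReal.ofReal (η/2) := hε₁ (by
      rw [Real.dist_eq, sub_zero, abs_of_pos hεpos]; exact hεε₁)
    have h2 := (ENNReal.toReal_lt_toReal hKν_ne (by
      exact ENNReal.add_ne_top.mpr ⟨hνB_ne, ENNReal.ofReal_ne_top⟩)).mpr h1
    rwa [ENNReal.toReal_add hνB_ne ENNReal.ofReal_ne_top,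
      ENNReal.toReal_ofReal (by linarith)] at h2
  have hOgt : (ν B).toReal - η/2 < (ν Oε).toReal := by
    apply lt_of_lt_of_le hn₀
    apply ENNReal.toReal_le_toReal (by
      exact ((measure_mono ((hOB n₀).trans hBS)).trans_lt (hνfin _ hzpos4)).ne) hOν_ne |>.mpr
    apply measure_mono
    apply compl_subset_compl.mpr
    exact cthickening_mono hεn₀ _
  -- apply the key lemma to Kε and Oε
  have hKtend := key Kε isClosed_cthickening.measurableSet
    (by intro p hp; have := hcsnd ε hεpos.le hp; rw [mem_setOf_eq] at this ⊢; linarith)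
    (hfrK ε hεpos hεz hεbadK)
  have hOtend := key Oε isClosed_cthickening.isOpen_compl.measurableSet
    (fun p hp => lt_trans (show z/2 < z by linarith) (hBz (hOεB hp)))
    (hfrO ε hεpos hεbadO)
  have hWε := hW ε hεpos
  have hevU := hKtend.eventually_lt_const hKlt
  have hevL := hOtend.eventually_const_lt hOgt
  have hevD := hWε.eventually_lt_const (show (0:ℝ) < η/2 by linarith)
  filter_upwards [hevU, hevL, hevD, eventually_ge_atTop (0:ℝ)] with t hU hL hD ht0
  show dist (t * (P {ω | (Xt ω * Yt ω / (αt t * at' t), (Xt ω + Yt ω - 1) / at' t) ∈ B}).toReal)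
    ((ν B).toReal) < η
  -- pointwise event comparisons
  set EB : Set Ω := {ω | (Xt ω * Yt ω / (αt t * at' t), (Xt ω + Yt ω - 1) / at' t) ∈ B} with hEBdef
  set EK : Set Ω := {ω | ((Xt ω / αt t) * (Yt ω / at' t), Yt ω / at' t) ∈ Kε} with hEKdef
  set EO : Set Ω := {ω | ((Xt ω / αt t) * (Yt ω / at' t), Yt ω / at' t) ∈ Oε} with hEOdef
  set ED : Set Ω := {ω | ε < (Xt ω - 1) / at' t} with hEDdef
  have hw0 : ∀ ω : Ω, 0 ≤ (Xt ω - 1) / at' t :=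
    fun ω => div_nonneg (by linarith [hXt ω]) (hapos t).le
  have hpt : ∀ ω : Ω, (Xt ω * Yt ω / (αt t * at' t), (Xt ω + Yt ω - 1) / at' t)
      = (((Xt ω / αt t) * (Yt ω / at' t), Yt ω / at' t + (Xt ω - 1) / at' t) : ℝ × ℝ) := by
    intro ω
    simp only [Prod.mk.injEq]
    constructor
    · exact (div_mul_div_comm _ _ _ _).symm
    · rw [← add_div]
      congr 1
      ring
  have hdist : ∀ ω : Ω, (Xt ω - 1) / at' t ≤ ε →
      dist (((Xt ω / αt t) * (Yt ω / at' t), Yt ω / at' t) : ℝ × ℝ)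
        (((Xt ω / αt t) * (Yt ω / at' t), Yt ω / at' t + (Xt ω - 1) / at' t) : ℝ × ℝ) ≤ ε := by
    intro ω hwd
    rw [Prod.dist_eq]
    apply max_le
    · rw [dist_self]; exact hεpos.le
    · rw [Real.dist_eq]
      have heq : Yt ω / at' t - (Yt ω / at' t + (Xt ω - 1) / at' t)
          = -((Xt ω - 1) / at' t) := by ring
      rw [heq, abs_neg, abs_of_nonneg (hw0 ω)]
      exact hwd
  have hsub1 : EB ⊆ EK ∪ ED := by
    intro ω hω
    rw [hEBdef, mem_setOf_eq, hpt ω] at hω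
    by_cases hwd : ε < (Xt ω - 1) / at' t
    · exact Or.inr hwd
    · rw [not_lt] at hwd
      exact Or.inl (mem_cthickening_of_dist_le _ _ ε B hω (hdist ω hwd))
  have hsub2 : EO ⊆ EB ∪ ED := by
    intro ω hω
    by_cases hwd : ε < (Xt ω - 1) / at' t
    · exact Or.inr hwd
    · rw [not_lt] at hwd
      left
      rw [hEBdef, mem_setOf_eq, hpt ω]
      by_contra hpB
      exact hω (mem_cthickening_of_dist_le _ _ ε Bᶜ hpB (hdist ω hwd))
  have hPEB : (P EB).toReal ≤ (P EK).toReal + (P ED).toReal := by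
    have h1 : P EB ≤ P EK + P ED := (measure_mono hsub1).trans (measure_union_le _ _)
    have h2 := ENNReal.toReal_mono
      (ENNReal.add_ne_top.mpr ⟨measure_ne_top _ _, measure_ne_top _ _⟩) h1
    rwa [ENNReal.toReal_add (measure_ne_top _ _) (measure_ne_top _ _)] at h2
  have hPEO : (P EO).toReal ≤ (P EB).toReal + (P ED).toReal := by
    have h1 : P EO ≤ P EB + P ED := (measure_mono hsub2).trans (measure_union_le _ _)
    have h2 := ENNReal.toReal_mono
      (ENNReal.add_ne_top.mpr ⟨measure_ne_top _ _, measure_ne_top _ _⟩) h1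
    rwa [ENNReal.toReal_add (measure_ne_top _ _) (measure_ne_top _ _)] at h2
  have hUb : t * (P EB).toReal ≤ t * (P EK).toReal + t * (P ED).toReal := by
    rw [← mul_add]; exact mul_le_mul_of_nonneg_left hPEB ht0
  have hLb : t * (P EO).toReal ≤ t * (P EB).toReal + t * (P ED).toReal := by
    rw [← mul_add]; exact mul_le_mul_of_nonneg_left hPEO ht0
  rw [Real.dist_eq, abs_lt]
  constructor
  · linarith
  · linarith
end

section
/- Let X and Y be nonnegative random variables with 0 ≤ X ≤ β(∞) for some β(∞) > 0, and suppose: (i) t·P[Y/a(t) > y] → y^{-1/γ} for all y > 0, where γ > 0 and a ∈ RV_γ; (ii) t·P[((β(∞)-X)/α(t), Y/a(t)) ∈ ·] → μ vaguely on [0,∞] × (0,∞] with α ∈ RV_ρ, ρ < 0, and μ nondegenerate Radon. Then for all z > 0, t·P[XY/a(t) > z] → z^{-1/γ}·β(∞)^{1/γ}; in particular XY has regularly varying tail of index -1/γ. -/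
open MeasureTheory Filter Topology Set

lemma pick_nonatom (μ : Measure (ℝ × ℝ)) {T : Set (ℝ × ℝ)} (hT : μ T ≠ ⊤)
    {S : ℝ → Set (ℝ × ℝ)} (hSm : ∀ y, MeasurableSet (S y)) (hsub : ∀ y, S y ⊆ T)
    (hdisj : Pairwise (Function.onFun Disjoint S)) {I : Set ℝ} (hI : volume I ≠ 0) :
    ∃ y ∈ I, μ (S y) = 0 := by
  have hc : Set.Countable {y | 0 < μ (S y)} :=
    Measure.countable_meas_pos_of_disjoint_of_meas_iUnion_ne_top μ hSm hdisj
      (ne_top_of_le_ne_top hT (measure_mono (iUnion_subset hsub)))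
  by_contra h
  push_neg at h
  have hss : I ⊆ {y | 0 < μ (S y)} := fun y hy => pos_iff_ne_zero.2 (h y hy)
  exact hI (measure_mono_null hss (hc.measure_zero volume))

lemma rig_lemma {Ω : Type*} [MeasurableSpace Ω] (P : Measure Ω) [IsProbabilityMeasure P]
    (Y : Ω → ℝ) {γ : ℝ} (hγ : 0 < γ) (a : ℝ → ℝ)
    (hYtail : ∀ y : ℝ, 0 < y →
      Tendsto (fun t => t * (P {ω | Y ω > a t * y}).toReal) atTop (𝓝 (y ^ (-(1 / γ))))) :
    ∃ T₁ : ℝ, 1 ≤ T₁ ∧ ∀ t s : ℝ, T₁ ≤ t → 2 * t ≤ s → s ≤ 4 * t →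
      a s ≤ (5:ℝ) ^ γ * a t := by
  by_contra h
  push_neg at h
  choose t s ht h2 h4 hlt using fun n : ℕ => h (max 1 n) (le_max_left _ _)
  have htt : Tendsto t atTop atTop :=
    tendsto_atTop_mono (fun n => (le_max_right 1 (n:ℝ)).trans (ht n))
      tendsto_natCast_atTop_atTop
  have htpos : ∀ n, (0:ℝ) ≤ t n := fun n => le_trans (by positivity)
    ((le_max_left 1 (n:ℝ)).trans (ht n))
  have hst : Tendsto s atTop atTop :=
    tendsto_atTop_mono (fun n => le_trans (by nlinarith [htpos n]) (h2 n)) htt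
  have h5pos : (0:ℝ) < (5:ℝ) ^ γ := Real.rpow_pos_of_pos (by norm_num) γ
  have l1 : Tendsto (fun n => s n * (P {ω | Y ω > a (s n) * 1}).toReal) atTop
      (𝓝 ((1:ℝ) ^ (-(1 / γ)))) := (hYtail 1 one_pos).comp hst
  have l2 : Tendsto (fun n => 4 * (t n * (P {ω | Y ω > a (t n) * (5:ℝ)^γ}).toReal)) atTop
      (𝓝 (4 * ((5:ℝ)^γ) ^ (-(1 / γ)))) := ((hYtail _ h5pos).comp htt).const_mul 4
  have hle : ∀ n, s n * (P {ω | Y ω > a (s n) * 1}).toReal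
      ≤ 4 * (t n * (P {ω | Y ω > a (t n) * (5:ℝ)^γ}).toReal) := by
    intro n
    have hincl : {ω | Y ω > a (s n) * 1} ⊆ {ω | Y ω > a (t n) * (5:ℝ)^γ} := by
      intro ω hω
      have : (5:ℝ)^γ * a (t n) < a (s n) := hlt n
      simp only [Set.mem_setOf_eq, mul_one] at hω ⊢
      linarith
    have hP : (P {ω | Y ω > a (s n) * 1}).toReal
        ≤ (P {ω | Y ω > a (t n) * (5:ℝ)^γ}).toReal :=
      ENNReal.toReal_mono (measure_ne_top _ _) (measure_mono hincl)
    have hs4 : s n ≤ 4 * t n := h4 n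
    have h0 : (0:ℝ) ≤ s n := le_trans (by nlinarith [htpos n]) (h2 n)
    calc s n * (P {ω | Y ω > a (s n) * 1}).toReal
        ≤ (4 * t n) * (P {ω | Y ω > a (t n) * (5:ℝ)^γ}).toReal := by
          apply mul_le_mul hs4 hP ENNReal.toReal_nonneg (by linarith [htpos n])
      _ = 4 * (t n * (P {ω | Y ω > a (t n) * (5:ℝ)^γ}).toReal) := by ring
  have hfin := le_of_tendsto_of_tendsto' l1 l2 hle
  have hid : ((5:ℝ)^γ) ^ (-(1 / γ)) = 5⁻¹ := by
    rw [← Real.rpow_mul (by norm_num : (0:ℝ) ≤ 5)]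
    have : γ * -(1 / γ) = -1 := by field_simp
    rw [this, Real.rpow_neg_one]
  rw [Real.one_rpow, hid] at hfin
  norm_num at hfin

lemma dya_lemma {α : ℝ → ℝ} (hαpos : ∀ t, 0 < α t) {ρ : ℝ} (hρ : ρ < 0)
    (hαRV : RegVar α ρ) (T₁ : ℝ) :
    ∃ T₀ : ℝ, 1 ≤ T₀ ∧ T₁ ≤ T₀ ∧
      Tendsto (fun m : ℕ => α (2 ^ m * T₀)) atTop (𝓝 0) := by
  set q : ℝ := ((2:ℝ) ^ ρ + 1) / 2 with hq
  have h2ρpos : (0:ℝ) < (2:ℝ) ^ ρ := Real.rpow_pos_of_pos two_pos ρ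
  have h2ρlt : (2:ℝ) ^ ρ < 1 := Real.rpow_lt_one_of_one_lt_of_neg one_lt_two hρ
  have hq1 : q < 1 := by rw [hq]; linarith
  have hq0 : 0 ≤ q := by rw [hq]; linarith
  have hqgt : (2:ℝ) ^ ρ < q := by rw [hq]; linarith
  have hev : ∀ᶠ τ in atTop, α (τ * 2) / α τ < q :=
    (hαRV 2 two_pos).eventually_lt_const hqgt
  obtain ⟨T₂, hT₂⟩ := eventually_atTop.1 hev
  refine ⟨max (max T₂ T₁) 1, le_max_right _ _,
    le_trans (le_max_right T₂ T₁) (le_max_left _ _), ?_⟩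
  set T₀ : ℝ := max (max T₂ T₁) 1 with hT₀
  have hT₀pos : (0:ℝ) < T₀ := lt_of_lt_of_le one_pos (le_max_right _ _)
  have hT₀1 : (1:ℝ) ≤ T₀ := le_max_right _ _
  have hT₂T₀ : T₂ ≤ T₀ := le_trans (le_max_left T₂ T₁) (le_max_left _ _)
  have key : ∀ m : ℕ, α (2 ^ m * T₀) ≤ q ^ m * α T₀ := by
    intro m
    induction m with
    | zero => simp
    | succ m ih =>
      have hTm : T₂ ≤ 2 ^ m * T₀ := by
        have h1 : (1:ℝ) ≤ 2 ^ m := one_le_pow₀ (by norm_num)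
        nlinarith
      have hdiv := hT₂ (2 ^ m * T₀) hTm
      have hα' : α ((2 ^ m * T₀) * 2) ≤ q * α (2 ^ m * T₀) :=
        ((div_lt_iff₀ (hαpos _)).1 hdiv).le
      have hrw : (2:ℝ) ^ (m + 1) * T₀ = (2 ^ m * T₀) * 2 := by ring
      rw [hrw]
      calc α ((2 ^ m * T₀) * 2) ≤ q * α (2 ^ m * T₀) := hα'
        _ ≤ q * (q ^ m * α T₀) := mul_le_mul_of_nonneg_left ih hq0
        _ = q ^ (m + 1) * α T₀ := by ring
  refine squeeze_zero (fun m => (hαpos _).le) key ?_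
  have := (tendsto_pow_atTop_nhds_zero_of_lt_one hq0 hq1).mul_const (α T₀)
  simpa using this

lemma key_vanish {Ω : Type*} [MeasurableSpace Ω] (P : Measure Ω) [IsProbabilityMeasure P]
    (X Y : Ω → ℝ) (βinf : ℝ)
    {ρ γ : ℝ} (hρ : ρ < 0) (hγ : 0 < γ)
    (α a : ℝ → ℝ) (hαpos : ∀ t, 0 < α t) (hapos : ∀ t, 0 < a t)
    (hαRV : RegVar α ρ)
    (hYtail : ∀ y : ℝ, 0 < y →
      Tendsto (fun t => t * (P {ω | Y ω > a t * y}).toReal) atTop (𝓝 (y ^ (-(1 / γ)))))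
    (μ : Measure (ℝ × ℝ)) (hRadon : RadonCone μ)
    (hconv : VagueConvCone P (fun t ω => ((βinf - X ω) / α t, Y ω / a t)) μ)
    {z₁ η : ℝ} (hz₁ : 0 < z₁) (hη : 0 < η) :
    Tendsto (fun t => t * (P {ω | η ≤ βinf - X ω ∧ a t * z₁ < Y ω}).toReal) atTop (𝓝 0) := by
  classical
  set C : ℝ := (5:ℝ) ^ γ with hC
  have hCpos : 0 < C := Real.rpow_pos_of_pos (by norm_num) γ
  obtain ⟨T₁, hT₁1, hrig⟩ := rig_lemma P Y hγ a hYtail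
  obtain ⟨T₀, hT₀1, hT₀T₁, hdya⟩ := dya_lemma hαpos hρ hαRV T₁
  have hT₀pos : (0:ℝ) < T₀ := lt_of_lt_of_le one_pos hT₀1
  -- choose z₂
  have hz2CI : z₁ / (2 * C) < z₁ / C :=
    div_lt_div_of_pos_left hz₁ hCpos (by linarith)
  have hIvol : volume (Ioc (z₁ / (2 * C)) (z₁ / C)) ≠ 0 := by
    rw [Real.volume_Ioc]
    simp only [ne_eq, ENNReal.ofReal_eq_zero, not_le]
    linarith
  have hTfin : μ {p : ℝ × ℝ | z₁ / (2 * C) < p.2} ≠ ⊤ :=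
    (hRadon _ (by positivity)).ne
  obtain ⟨z₂, hz₂I, hz₂atom⟩ := pick_nonatom μ hTfin
    (S := fun y => {p : ℝ × ℝ | p.2 = y ∧ z₁ / (2 * C) < p.2})
    (fun y => (measurable_snd (measurableSet_singleton y)).inter
      (measurable_snd measurableSet_Ioi))
    (fun y p hp => hp.2)
    (fun y y' hyy' => by
      simp only [Function.onFun, Set.disjoint_left]
      rintro p ⟨hp1, -⟩ ⟨hp2, -⟩
      exact hyy' (hp1 ▸ hp2 ▸ rfl)) hIvol
  have hz₂pos : 0 < z₂ := lt_trans (by positivity) hz₂I.1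
  have hz₂C : z₂ * C ≤ z₁ := by
    have := hz₂I.2
    rw [le_div_iff₀ hCpos] at this
    linarith [this]
  have hz₂line : μ {p : ℝ × ℝ | p.2 = z₂} = 0 := by
    refine measure_mono_null (fun p hp => ?_) hz₂atom
    have hp' : p.2 = z₂ := hp
    exact ⟨hp', by rw [hp']; exact hz₂I.1⟩
  have hz₂fin : μ {p : ℝ × ℝ | z₂ < p.2} ≠ ⊤ := (hRadon _ hz₂pos).ne
  -- the tendsto-to-zero goal, via tendsto_order
  rw [tendsto_order]
  constructor
  · intro b hb
    filter_upwards [eventually_ge_atTop (0:ℝ)] with t ht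
    exact lt_of_lt_of_le hb (by positivity)
  intro ε hε
  -- continuity from above to find N
  set A : ℕ → Set (ℝ × ℝ) := fun n => {p | (n:ℝ) < p.1 ∧ z₂ < p.2} with hA
  have hAm : ∀ n, MeasurableSet (A n) :=
    fun n => (measurable_fst measurableSet_Ioi).inter (measurable_snd measurableSet_Ioi)
  have hAanti : Antitone A := by
    intro n m hnm p hp
    exact ⟨lt_of_le_of_lt (by exact_mod_cast Nat.cast_le.2 hnm) hp.1, hp.2⟩
  have hAfin : ∃ n, μ (A n) ≠ ⊤ :=
    ⟨0, ne_top_of_le_ne_top hz₂fin (measure_mono (fun p hp => hp.2))⟩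
  have hAempty : ⋂ n, A n = ∅ := by
    ext p
    simp only [Set.mem_iInter, Set.mem_empty_iff_false, iff_false, not_forall]
    obtain ⟨n, hn⟩ := exists_nat_gt p.1
    exact ⟨n, fun hp => absurd hp.1 (not_lt.2 hn.le)⟩
  have htmi := tendsto_measure_iInter_atTop (μ := μ)
    (fun n => (hAm n).nullMeasurableSet) hAanti hAfin
  rw [hAempty, measure_empty] at htmi
  have hεE : (0:ENNReal) < ENNReal.ofReal ε := ENNReal.ofReal_pos.2 hε
  obtain ⟨N, hN⟩ := (htmi.eventually_lt_const hεE).exists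
  -- choose K'
  have hIvol2 : volume (Ioc (N:ℝ) ((N:ℝ) + 1)) ≠ 0 := by
    rw [Real.volume_Ioc]
    simp only [ne_eq, ENNReal.ofReal_eq_zero, not_le]
    linarith
  obtain ⟨K', hK'I, hK'atom⟩ := pick_nonatom μ hz₂fin
    (S := fun κ => {p : ℝ × ℝ | p.1 = κ ∧ z₂ < p.2})
    (fun κ => (measurable_fst (measurableSet_singleton κ)).inter
      (measurable_snd measurableSet_Ioi))
    (fun κ p hp => hp.2)
    (fun κ κ' hκκ' => by
      simp only [Function.onFun, Set.disjoint_left]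
      rintro p ⟨hp1, -⟩ ⟨hp2, -⟩
      exact hκκ' (hp1 ▸ hp2 ▸ rfl)) hIvol2
  have hK'pos : 0 < K' := lt_of_le_of_lt (Nat.cast_nonneg N) hK'I.1
  -- the test set B
  set B : Set (ℝ × ℝ) := Ioi K' ×ˢ Ioi z₂ with hB
  have hBm : MeasurableSet B := measurableSet_Ioi.prod measurableSet_Ioi
  have hBfr : μ (frontier B) = 0 := by
    rw [hB, frontier_prod_eq]
    refine measure_union_null ?_ ?_
    · refine measure_mono_null ?_ hz₂line
      rintro p ⟨-, hp2⟩
      rw [frontier_Ioi] at hp2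
      exact hp2
    · refine measure_mono_null (?_ : _ ⊆ {p : ℝ × ℝ | p.1 = K' ∧ z₂ < p.2} ∪ {p : ℝ × ℝ | p.2 = z₂})
        (measure_union_null hK'atom hz₂line)
      rintro p ⟨hp1, hp2⟩
      rw [frontier_Ioi] at hp1
      rw [closure_Ioi] at hp2
      rcases eq_or_lt_of_le (Set.mem_Ici.1 hp2) with h | h
      · exact Or.inr h.symm
      · exact Or.inl ⟨hp1, h⟩
  have hBconv := hconv B hBm ⟨z₂, hz₂pos, fun p hp => hp.2⟩ hBfr
  -- the limit is < ε
  have hμB : (μ B).toReal < ε := by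
    have hBA : B ⊆ A N := by
      rintro p ⟨hp1, hp2⟩
      exact ⟨lt_trans hK'I.1 hp1, hp2⟩
    have h1 : μ B ≤ μ (A N) := measure_mono hBA
    have h2 : μ B < ENNReal.ofReal ε := lt_of_le_of_lt h1 hN
    exact (ENNReal.lt_ofReal_iff_toReal_lt
      (ne_top_of_le_ne_top hz₂fin (measure_mono (fun p hp => hp.2)))).1 h2
  have hev1 : ∀ᶠ τ in atTop,
      τ * (P {ω | ((βinf - X ω) / α τ, Y ω / a τ) ∈ B}).toReal < ε :=
    hBconv.eventually_lt_const hμB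
  -- dyadic index machinery
  have hex : ∀ t : ℝ, ∃ k : ℕ, t < 2 ^ (k + 1) * T₀ := by
    intro t
    obtain ⟨k, hk⟩ := pow_unbounded_of_one_lt (t / T₀) one_lt_two
    refine ⟨k, ?_⟩
    have := (div_lt_iff₀ hT₀pos).1 hk
    have h2 : (2:ℝ) ^ k * T₀ ≤ 2 ^ (k + 1) * T₀ := by
      have : (2:ℝ) ^ k ≤ 2 ^ (k + 1) := by
        apply pow_le_pow_right₀ (by norm_num) (Nat.le_succ k)
      nlinarith
    linarith
  set k : ℝ → ℕ := fun t => Nat.find (hex t) with hkdef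
  set sfun : ℝ → ℝ := fun t => 2 ^ (k t + 2) * T₀ with hsfun
  have hk1 : ∀ t, t < 2 ^ (k t + 1) * T₀ := fun t => Nat.find_spec (hex t)
  have hk0 : ∀ t, T₀ ≤ t → 2 ^ (k t) * T₀ ≤ t := by
    intro t ht
    rcases Nat.eq_zero_or_pos (k t) with h0 | hpos
    · rw [h0]; simpa using ht
    · have hmin := Nat.find_min (hex t) (Nat.sub_lt hpos one_pos)
      push_neg at hmin
      have heq : k t - 1 + 1 = k t := Nat.succ_pred_eq_of_pos hpos
      rwa [heq] at hmin
  have hks : ∀ t, T₀ ≤ t → 2 * t ≤ sfun t ∧ sfun t ≤ 4 * t := by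
    intro t ht
    constructor
    · have h1 := hk1 t
      have : sfun t = 2 * (2 ^ (k t + 1) * T₀) := by
        simp only [hsfun]; ring
      rw [this]; linarith
    · have h0 := hk0 t ht
      have : sfun t = 4 * (2 ^ (k t) * T₀) := by
        simp only [hsfun]; ring
      rw [this]; linarith
  have hktend : Tendsto k atTop atTop := by
    rw [tendsto_atTop]
    intro M
    filter_upwards [eventually_ge_atTop ((2:ℝ) ^ M * T₀)] with t ht
    by_contra hcon
    push_neg at hcon
    have hkt : k t + 1 ≤ M := hcon
    have : (2:ℝ) ^ (k t + 1) * T₀ ≤ 2 ^ M * T₀ := by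
      have : (2:ℝ) ^ (k t + 1) ≤ 2 ^ M := pow_le_pow_right₀ (by norm_num) hkt
      nlinarith
    linarith [hk1 t]
  have hstend : Tendsto sfun atTop atTop := by
    apply tendsto_atTop_mono' atTop (_ : (fun t => t) ≤ᶠ[atTop] sfun) tendsto_id
    filter_upwards [eventually_ge_atTop (max T₀ 0)] with t ht
    have h2 := (hks t (le_trans (le_max_left _ _) ht)).1
    have ht0 : 0 ≤ t := le_trans (le_max_right _ _) ht
    linarith
  -- eventual smallness of α along sfun
  have hsm : ∀ᶠ m : ℕ in atTop, α (2 ^ m * T₀) < η / K' :=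
    hdya.eventually_lt_const (by positivity)
  have hksm : Tendsto (fun t => k t + 2) atTop atTop :=
    (tendsto_add_atTop_nat 2).comp hktend
  have hαsm : ∀ᶠ t in atTop, α (sfun t) < η / K' := hksm.eventually hsm
  -- rigidity along sfun
  have hrigs : ∀ᶠ t in atTop, a (sfun t) * z₂ ≤ a t * z₁ := by
    filter_upwards [eventually_ge_atTop T₀] with t ht
    obtain ⟨h2, h4⟩ := hks t ht
    have has : a (sfun t) ≤ C * a t := hrig t (sfun t) (le_trans hT₀T₁ ht) h2 h4
    calc a (sfun t) * z₂ ≤ (C * a t) * z₂ :=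
          mul_le_mul_of_nonneg_right has hz₂pos.le
      _ = a t * (z₂ * C) := by ring
      _ ≤ a t * z₁ := mul_le_mul_of_nonneg_left hz₂C (hapos t).le
  -- main eventual bound
  filter_upwards [eventually_ge_atTop (max T₀ 0), hαsm, hrigs, hstend.eventually hev1]
    with t ht hαs hrigt hevs
  have htT₀ : T₀ ≤ t := le_trans (le_max_left _ _) ht
  have ht0 : 0 ≤ t := le_trans (le_max_right _ _) ht
  have hts : t ≤ sfun t := by linarith [(hks t htT₀).1]
  have hs0 : 0 ≤ sfun t := le_trans ht0 hts
  -- inclusion chain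
  have hincl1 : {ω | η ≤ βinf - X ω ∧ a t * z₁ < Y ω}
      ⊆ {ω | η ≤ βinf - X ω ∧ a (sfun t) * z₂ < Y ω} := by
    rintro ω ⟨h1, h2⟩
    exact ⟨h1, lt_of_le_of_lt hrigt h2⟩
  have hincl2 : {ω | η ≤ βinf - X ω ∧ a (sfun t) * z₂ < Y ω}
      ⊆ {ω | ((βinf - X ω) / α (sfun t), Y ω / a (sfun t)) ∈ B} := by
    rintro ω ⟨h1, h2⟩
    constructor
    · have hKα : K' * α (sfun t) < η := by
        have := hαs
        rw [lt_div_iff₀ hK'pos] at this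
        linarith [this]
      have : K' * α (sfun t) < βinf - X ω := lt_of_lt_of_le hKα h1
      exact (lt_div_iff₀ (hαpos (sfun t))).2 this
    · simp only [Set.mem_Ioi]
      rw [lt_div_iff₀ (hapos (sfun t))]
      linarith [h2]
  calc t * (P {ω | η ≤ βinf - X ω ∧ a t * z₁ < Y ω}).toReal
      ≤ sfun t * (P {ω | ((βinf - X ω) / α (sfun t), Y ω / a (sfun t)) ∈ B}).toReal := by
        apply mul_le_mul hts
          (ENNReal.toReal_mono (measure_ne_top _ _)
            (measure_mono (hincl1.trans hincl2)))
          ENNReal.toReal_nonneg hs0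
    _ < ε := hevs

lemma part1 {Ω : Type*} [MeasurableSpace Ω] (P : Measure Ω) [IsProbabilityMeasure P]
    (X Y : Ω → ℝ) (hY : ∀ ω, 0 ≤ Y ω)
    (βinf : ℝ) (hβinf : 0 < βinf) (hX : ∀ ω, 0 ≤ X ω ∧ X ω ≤ βinf)
    {γ : ℝ} (hγ : 0 < γ)
    (a : ℝ → ℝ) (hapos : ∀ t, 0 < a t)
    (hYtail : ∀ y : ℝ, 0 < y →
      Tendsto (fun t => t * (P {ω | Y ω > a t * y}).toReal) atTop (𝓝 (y ^ (-(1 / γ)))))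
    (hKEY : ∀ z₁ η : ℝ, 0 < z₁ → 0 < η →
      Tendsto (fun t => t * (P {ω | η ≤ βinf - X ω ∧ a t * z₁ < Y ω}).toReal) atTop (𝓝 0)) :
    ∀ z : ℝ, 0 < z →
      Tendsto (fun t => t * (P {ω | X ω * Y ω / a t > z}).toReal) atTop
        (𝓝 (z ^ (-(1 / γ)) * βinf ^ (1 / γ))) := by
  intro z hz
  set L : ℝ := z ^ (-(1 / γ)) * βinf ^ (1 / γ) with hL
  have hLpos : 0 < L := by positivity
  set z₁ : ℝ := z / βinf with hz₁def
  have hz₁pos : 0 < z₁ := by positivity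
  have hz₁L : z₁ ^ (-(1 / γ)) = L := by
    rw [hz₁def, Real.div_rpow hz.le hβinf.le, Real.rpow_neg hβinf.le, div_eq_mul_inv, inv_inv]
  rw [Metric.tendsto_nhds]
  intro ε hε
  -- choose δ
  have hbase : Tendsto (fun n : ℕ => (1 - 1 / ((n:ℝ) + 2))) atTop (𝓝 1) := by
    have h0 : Tendsto (fun n : ℕ => 1 / ((n:ℝ) + 2)) atTop (𝓝 0) := by
      apply squeeze_zero (fun n => by positivity) (g := fun n : ℕ => 1 / ((n:ℝ) + 1))
      · intro n
        apply div_le_div_of_nonneg_left one_pos.le (by positivity) (by linarith)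
      · exact tendsto_one_div_add_atTop_nhds_zero_nat
    have := h0.const_sub 1
    simpa using this
  have hδseq : Tendsto (fun n : ℕ => (1 - 1 / ((n:ℝ) + 2)) ^ (1 / γ) * L) atTop (𝓝 L) := by
    have hcont := (Real.continuousAt_rpow_const 1 (1 / γ) (Or.inl one_ne_zero)).tendsto
    have hcomp := hcont.comp hbase
    rw [Real.one_rpow] at hcomp
    simpa using hcomp.mul_const L
  obtain ⟨n, hn⟩ := (hδseq.eventually_const_lt (by linarith : L - ε / 4 < L)).exists
  set δ : ℝ := 1 - 1 / ((n:ℝ) + 2) with hδdef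
  have hδ0 : 0 < δ := by
    have h1 : 1 / ((n:ℝ) + 2) ≤ 1 / 2 :=
      div_le_div_of_nonneg_left one_pos.le (by norm_num) (by push_cast; linarith [Nat.cast_nonneg (α := ℝ) n])
    rw [hδdef]; linarith
  have hδ1 : δ < 1 := by
    have : 0 < 1 / ((n:ℝ) + 2) := by positivity
    rw [hδdef]; linarith
  have hδL : L - ε / 4 < δ ^ (1 / γ) * L := hn
  set z' : ℝ := z / (δ * βinf) with hz'def
  have hz'pos : 0 < z' := by positivity
  have hz'L : z' ^ (-(1 / γ)) = δ ^ (1 / γ) * L := by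
    rw [hz'def, Real.div_rpow hz.le (by positivity),
      Real.rpow_neg (show (0:ℝ) ≤ δ * βinf by positivity) (1/γ), div_eq_mul_inv, inv_inv,
      Real.mul_rpow hδ0.le hβinf.le, hL]
    ring
  have hup := hYtail z₁ hz₁pos
  rw [hz₁L] at hup
  have hlow := hYtail z' hz'pos
  rw [hz'L] at hlow
  have hkey := hKEY z₁ ((1 - δ) * βinf) hz₁pos (by nlinarith)
  filter_upwards [eventually_ge_atTop (0:ℝ),
    hup.eventually_lt_const (by linarith : L < L + ε / 2),
    hlow.eventually_const_lt (by linarith : δ ^ (1/γ) * L - ε / 4 < δ ^ (1/γ) * L),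
    (hkey.eventually_lt_const (by linarith : (0:ℝ) < ε / 4)),
    (hkey.eventually_const_lt (by linarith : -(ε/2) < (0:ℝ)))]
    with t ht0 hupt hlowt hkeyt hkeyt'
  -- notation
  set PA := (P {ω | X ω * Y ω / a t > z}).toReal with hPA
  have hPA0 : 0 ≤ PA := ENNReal.toReal_nonneg
  -- upper bound
  have hub : t * PA < L + ε / 2 := by
    have hincl : {ω | X ω * Y ω / a t > z} ⊆ {ω | Y ω > a t * z₁} := by
      intro ω hω
      simp only [Set.mem_setOf_eq, gt_iff_lt] at hω ⊢
      have hXY : z * a t < X ω * Y ω := (lt_div_iff₀ (hapos t)).1 hω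
      have h1 : X ω * Y ω ≤ βinf * Y ω :=
        mul_le_mul_of_nonneg_right (hX ω).2 (hY ω)
      have h2 : z * a t < βinf * Y ω := lt_of_lt_of_le hXY h1
      rw [hz₁def]
      rw [show a t * (z / βinf) = (z * a t) / βinf by ring]
      rw [div_lt_iff₀ hβinf]
      linarith [h2]
    have : t * PA ≤ t * (P {ω | Y ω > a t * z₁}).toReal := by
      apply mul_le_mul_of_nonneg_left
        (ENNReal.toReal_mono (measure_ne_top _ _) (measure_mono hincl)) ht0
    linarith [this, hupt]
  -- lower bound
  have hlb : L - ε < t * PA := by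
    have hincl : {ω | Y ω > a t * z'} ⊆ {ω | X ω * Y ω / a t > z}
        ∪ {ω | (1 - δ) * βinf ≤ βinf - X ω ∧ a t * z₁ < Y ω} := by
      intro ω hω
      simp only [Set.mem_setOf_eq, gt_iff_lt] at hω
      by_cases hc : (1 - δ) * βinf ≤ βinf - X ω
      · right
        refine ⟨hc, ?_⟩
        have hz₁z' : z₁ ≤ z' := by
          rw [hz₁def, hz'def]
          apply div_le_div_of_nonneg_left hz.le (by positivity)
          nlinarith
        have : a t * z₁ ≤ a t * z' := mul_le_mul_of_nonneg_left hz₁z' (hapos t).le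
        exact lt_of_le_of_lt this hω
      · left
        push_neg at hc
        have hXδ : δ * βinf < X ω := by nlinarith
        have hYpos : 0 < Y ω := lt_of_le_of_lt (mul_pos (hapos t) hz'pos).le hω
        have h1 : δ * βinf * Y ω < X ω * Y ω := mul_lt_mul_of_pos_right hXδ hYpos
        have h2 : a t * z' * (δ * βinf) ≤ Y ω * (δ * βinf) :=
          mul_le_mul_of_nonneg_right hω.le (mul_pos hδ0 hβinf).le
        have h3 : a t * z' * (δ * βinf) = z * a t := by
          rw [hz'def]; field_simp
        have h4 : Y ω * (δ * βinf) = δ * βinf * Y ω := by ring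
        simp only [Set.mem_setOf_eq, gt_iff_lt]
        rw [lt_div_iff₀ (hapos t)]
        linarith [h1, h2, h3, h4]
    have hm : P {ω | Y ω > a t * z'} ≤ P {ω | X ω * Y ω / a t > z}
        + P {ω | (1 - δ) * βinf ≤ βinf - X ω ∧ a t * z₁ < Y ω} :=
      le_trans (measure_mono hincl) (measure_union_le _ _)
    have hm' : (P {ω | Y ω > a t * z'}).toReal ≤ PA
        + (P {ω | (1 - δ) * βinf ≤ βinf - X ω ∧ a t * z₁ < Y ω}).toReal := by
      have h1 := ENNReal.toReal_mono
        (by exact (ENNReal.add_ne_top).2 ⟨measure_ne_top _ _, measure_ne_top _ _⟩) hm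
      rwa [ENNReal.toReal_add (measure_ne_top _ _) (measure_ne_top _ _)] at h1
    have hmul : t * (P {ω | Y ω > a t * z'}).toReal ≤ t * PA
        + t * (P {ω | (1 - δ) * βinf ≤ βinf - X ω ∧ a t * z₁ < Y ω}).toReal := by
      have := mul_le_mul_of_nonneg_left hm' ht0
      linarith [this]
    have hA : δ ^ (1/γ) * L - ε / 4 < t * (P {ω | Y ω > a t * z'}).toReal := hlowt
    have hB : t * (P {ω | (1 - δ) * βinf ≤ βinf - X ω ∧ a t * z₁ < Y ω}).toReal < ε / 4 := hkeyt
    linarith [hmul, hA, hB, hδL]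
  rw [Real.dist_eq, abs_lt]
  constructor <;> [linarith; linarith]

set_option maxHeartbeats 1000000 in
lemma tail_rv {γ : ℝ} (hγ : 0 < γ) (a : ℝ → ℝ) (hapos : ∀ t, 0 < a t) (haRV : RegVar a γ)
    (T : ℝ → ℝ) (hT0 : ∀ u, 0 ≤ T u) (hTanti : ∀ u v : ℝ, u ≤ v → T v ≤ T u)
    (c : ℝ) (hc : 0 < c)
    (hlim : ∀ z : ℝ, 0 < z →
      Tendsto (fun t => t * T (a t * z)) atTop (𝓝 (z ^ (-(1/γ)) * c))) :
    RegVar T (-(1/γ)) := by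
  classical
  intro x hx
  set e : ℝ := -(1/γ) with he
  have hxe : 0 < x ^ e := Real.rpow_pos_of_pos hx e
  rw [Metric.tendsto_nhds]
  intro ε hε
  -- small parameter
  set cδ : ℝ := min 1 (ε * x ^ (1/γ) / 4) with hcδdef
  have hx1γ : 0 < x ^ (1/γ) := Real.rpow_pos_of_pos hx _
  have hcδ0 : 0 < cδ := lt_min one_pos (by positivity)
  have hcδ1 : cδ ≤ 1 := min_le_left _ _
  have hprod : x ^ (1/γ) * x ^ e = 1 := by
    rw [← Real.rpow_add hx, he]
    simp
  have hcδε : 3 * cδ * x ^ e ≤ 3 * ε / 4 := by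
    have h1 : cδ ≤ ε * x ^ (1/γ) / 4 := min_le_right _ _
    have h2 : cδ * x ^ e ≤ (ε * x ^ (1/γ) / 4) * x ^ e :=
      mul_le_mul_of_nonneg_right h1 hxe.le
    have h3 : (ε * x ^ (1/γ) / 4) * x ^ e = ε / 4 := by
      rw [show (ε * x ^ (1/γ) / 4) * x ^ e = ε / 4 * (x ^ (1/γ) * x ^ e) by ring, hprod]
      ring
    linarith
  set r : ℝ := 1 + cδ with hrdef
  have hr1 : 1 < r := by rw [hrdef]; linarith
  have hr0 : 0 < r := by linarith
  have hrγ : 1 < r ^ γ := (Real.one_lt_rpow_iff_of_pos hr0).2 (Or.inl ⟨hr1, hγ⟩)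
  have hrγ0 : 0 < r ^ γ := by linarith
  set R : ℝ := (r ^ γ) ^ 2 with hRdef
  have hR1 : r ^ γ < R := by rw [hRdef]; nlinarith
  have hR0 : 0 < R := by rw [hRdef]; positivity
  set ρm : ℝ := (1 + r ^ γ) / 2 with hρmdef
  have hρm1 : 1 < ρm := by rw [hρmdef]; linarith
  have hρmlt : ρm < r ^ γ := by rw [hρmdef]; linarith
  -- grid
  have hstepev : ∀ᶠ t in atTop, a (t * r) / a t < R ∧ ρm < a (t * r) / a t :=
    ((haRV r hr0).eventually_lt_const hR1).and ((haRV r hr0).eventually_const_lt hρmlt)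
  obtain ⟨T₄, hT₄⟩ := eventually_atTop.1 hstepev
  set T₃ : ℝ := max T₄ 1 with hT₃def
  have hT₃1 : (1:ℝ) ≤ T₃ := le_max_right _ _
  have hT₃0 : (0:ℝ) < T₃ := lt_of_lt_of_le one_pos hT₃1
  set G : ℕ → ℝ := fun j => a (r ^ j * T₃) with hGdef
  have hGpos : ∀ j, 0 < G j := fun j => hapos _
  have hgrid : ∀ j : ℕ, T₄ ≤ r ^ j * T₃ := by
    intro j
    have h1 : (1:ℝ) ≤ r ^ j := one_le_pow₀ hr1.le
    have := le_max_left T₄ 1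
    nlinarith
  have hstep : ∀ j : ℕ, G (j+1) < R * G j ∧ ρm * G j < G (j+1) := by
    intro j
    have h := hT₄ (r ^ j * T₃) (hgrid j)
    have hrw : r ^ (j+1) * T₃ = (r ^ j * T₃) * r := by ring
    constructor
    · have := h.1
      rw [div_lt_iff₀ (hapos _)] at this
      rw [hGdef]
      simp only
      rw [hrw]
      linarith [this]
    · have := h.2
      rw [lt_div_iff₀ (hapos _)] at this
      rw [hGdef]
      simp only
      rw [hrw]
      linarith [this]
  have hGmono : StrictMono G := by
    apply strictMono_nat_of_lt_succ
    intro j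
    have h1 := (hstep j).2
    nlinarith [hGpos j, hρm1]
  have hGlow : ∀ j : ℕ, ρm ^ j * G 0 ≤ G j := by
    intro j
    induction j with
    | zero => simp
    | succ j ih =>
      have h1 := (hstep j).2
      have h2 : ρm * (ρm ^ j * G 0) ≤ ρm * G j :=
        mul_le_mul_of_nonneg_left ih (by linarith)
      calc ρm ^ (j+1) * G 0 = ρm * (ρm ^ j * G 0) := by ring
        _ ≤ ρm * G j := h2
        _ ≤ G (j+1) := h1.le
  have hGtop : Tendsto G atTop atTop :=
    tendsto_atTop_mono hGlow
      ((tendsto_pow_atTop_atTop_of_one_lt hρm1).atTop_mul_const (hGpos 0))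
  have hexJ : ∀ u : ℝ, ∃ j : ℕ, u < G (j + 1) := by
    intro u
    obtain ⟨j, hj⟩ := (hGtop.eventually_gt_atTop u).exists
    exact ⟨j, lt_of_lt_of_le hj (hGmono.monotone (Nat.le_succ j))⟩
  set J : ℝ → ℕ := fun u => Nat.find (hexJ u) with hJdef
  have hJ1 : ∀ u, u < G (J u + 1) := fun u => Nat.find_spec (hexJ u)
  have hJ0 : ∀ u, G 0 ≤ u → G (J u) ≤ u := by
    intro u hu
    rcases Nat.eq_zero_or_pos (J u) with h0 | hpos
    · rw [h0]; exact hu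
    · have hmin := Nat.find_min (hexJ u) (Nat.sub_lt hpos one_pos)
      push_neg at hmin
      have heq : J u - 1 + 1 = J u := Nat.succ_pred_eq_of_pos hpos
      rwa [heq] at hmin
  have hJtend : Tendsto J atTop atTop := by
    rw [tendsto_atTop]
    intro M
    filter_upwards [eventually_ge_atTop (G M)] with u hu
    have h1 : G M < G (J u + 1) := lt_of_le_of_lt hu (hJ1 u)
    have h2 : M < J u + 1 := hGmono.lt_iff_lt.1 h1
    omega
  set tg : ℝ → ℝ := fun u => r ^ (J u) * T₃ with htgdef
  have htgpos : ∀ u, 0 < tg u := fun u => by positivity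
  have htgG : ∀ u, a (tg u) = G (J u) := fun u => rfl
  have htgtop : Tendsto tg atTop atTop :=
    ((tendsto_pow_atTop_atTop_of_one_lt hr1).comp hJtend).atTop_mul_const hT₃0
  have CL : ∀ w : ℝ, 0 < w →
      Tendsto (fun u => tg u * T (a (tg u) * w)) atTop (𝓝 (w ^ e * c)) :=
    fun w hw => (hlim w hw).comp htgtop
  -- value computations
  have hRe : R ^ e = r ^ (-2 : ℝ) := by
    have h1 : R = (r ^ γ) ^ ((2:ℕ):ℝ) := by rw [Real.rpow_natCast]
    rw [h1, ← Real.rpow_mul hrγ0.le, ← Real.rpow_mul hr0.le]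
    push_cast
    congr 1
    rw [he]
    field_simp
  have hr2 : r ^ (2:ℝ) = r * r := by
    rw [show (2:ℝ) = ((2:ℕ):ℝ) by norm_num, Real.rpow_natCast]
    ring
  have hrn2 : r ^ (-2:ℝ) = (r * r)⁻¹ := by
    rw [show (-2:ℝ) = -(2:ℝ) by norm_num, Real.rpow_neg hr0.le, hr2]
  have hRe0 : 0 < R ^ e := Real.rpow_pos_of_pos hR0 e
  -- upper limit value
  have hupval : x ^ e / R ^ e < x ^ e + ε := by
    rw [hRe, hrn2, div_eq_mul_inv, inv_inv]
    have hrr : r * r ≤ 1 + 3 * cδ := by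
      rw [hrdef]
      nlinarith [hcδ0, hcδ1, mul_pos hcδ0 hcδ0]
    have h1 : x ^ e * (r * r) ≤ x ^ e * (1 + 3 * cδ) :=
      mul_le_mul_of_nonneg_left hrr hxe.le
    have hexp : x ^ e * (1 + 3 * cδ) = x ^ e + 3 * cδ * x ^ e := by ring
    linarith [h1, hexp, hcδε, hε]
  -- lower limit value
  have hlowval : x ^ e - ε < (R * x) ^ e := by
    rw [Real.mul_rpow hR0.le hx.le, hRe, hrn2]
    have hrr1 : (1 - 3 * cδ) * (r * r) ≤ 1 := by
      rw [hrdef]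
      nlinarith [hcδ0, hcδ1, mul_pos hcδ0 hcδ0, mul_pos (mul_pos hcδ0 hcδ0) hcδ0]
    have hrrpos : 0 < r * r := mul_pos hr0 hr0
    have h2 : 1 - 3 * cδ ≤ (r * r)⁻¹ := by
      calc 1 - 3 * cδ = (1 - 3 * cδ) * (r * r) * (r * r)⁻¹ := by field_simp
        _ ≤ 1 * (r * r)⁻¹ := mul_le_mul_of_nonneg_right hrr1 (inv_nonneg.2 hrrpos.le)
        _ = (r * r)⁻¹ := one_mul _
    have h3 : (1 - 3 * cδ) * x ^ e ≤ (r * r)⁻¹ * x ^ e :=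
      mul_le_mul_of_nonneg_right h2 hxe.le
    have hexp2 : (1 - 3 * cδ) * x ^ e = x ^ e - 3 * cδ * x ^ e := by ring
    linarith [h3, hexp2, hcδε, hε]
  -- composed limits and eventual bounds
  have hA := CL x hx
  have hB := CL R hR0
  have hCt := CL (R * x) (mul_pos hR0 hx)
  have hD := CL 1 one_pos
  have hBlim : (0:ℝ) < R ^ e * c := by positivity
  have hratioUB := hA.div hB (ne_of_gt hBlim)
  have hval1 : x ^ e * c / (R ^ e * c) = x ^ e / R ^ e := by
    rw [mul_div_mul_right _ _ (ne_of_gt hc)]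
  rw [hval1] at hratioUB
  have hevUB := hratioUB.eventually_lt_const hupval
  have hratioLB := hCt.div hD (by rw [Real.one_rpow, one_mul]; exact ne_of_gt hc)
  have hval2 : (R * x) ^ e * c / ((1:ℝ) ^ e * c) = (R * x) ^ e := by
    rw [Real.one_rpow, one_mul, mul_div_cancel_right₀ _ (ne_of_gt hc)]
  rw [hval2] at hratioLB
  have hevLB := hratioLB.eventually_const_lt hlowval
  have hevBpos : ∀ᶠ u in atTop, 0 < tg u * T (a (tg u) * R) :=
    hB.eventually_const_lt hBlim
  filter_upwards [eventually_ge_atTop (G 0), hevUB, hevLB, hevBpos] with u hu hUB hLB hBpos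
  have htgu : 0 < tg u := htgpos u
  have hGa : a (tg u) = G (J u) := rfl
  have hGju : a (tg u) ≤ u := by rw [hGa]; exact hJ0 u hu
  have hGju2 : u < R * a (tg u) := by
    rw [hGa]; exact lt_trans (hJ1 u) (hstep (J u)).1
  have hTB : 0 < T (a (tg u) * R) := by
    rcases mul_pos_iff.1 hBpos with ⟨-, h⟩ | ⟨h1, -⟩
    · exact h
    · exact absurd htgu (not_lt.2 h1.le)
  have hTu : 0 < T u := by
    have h1 : u ≤ a (tg u) * R := by
      have h2 : R * a (tg u) = a (tg u) * R := mul_comm _ _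
      linarith
    exact lt_of_lt_of_le hTB (hTanti u (a (tg u) * R) h1)
  -- upper chain
  have hTux : T (u * x) ≤ T (a (tg u) * x) :=
    hTanti _ _ (mul_le_mul_of_nonneg_right hGju hx.le)
  have hTBu : T (a (tg u) * R) ≤ T u := by
    apply hTanti
    have h2 : R * a (tg u) = a (tg u) * R := mul_comm _ _
    linarith
  have hdiv1 : T (u * x) / T u ≤ T (a (tg u) * x) / T (a (tg u) * R) :=
    div_le_div₀ (hT0 _) hTux hTB hTBu
  have heq1 : T (a (tg u) * x) / T (a (tg u) * R)
      = tg u * T (a (tg u) * x) / (tg u * T (a (tg u) * R)) :=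
    (mul_div_mul_left _ _ (ne_of_gt htgu)).symm
  have hub : T (u * x) / T u < x ^ e + ε := by
    rw [heq1] at hdiv1
    exact lt_of_le_of_lt hdiv1 hUB
  -- lower chain
  have hTlx : T (a (tg u) * (R * x)) ≤ T (u * x) := by
    apply hTanti
    have h5 : u * x ≤ R * a (tg u) * x := mul_le_mul_of_nonneg_right hGju2.le hx.le
    have h6 : R * a (tg u) * x = a (tg u) * (R * x) := by ring
    linarith
  have hTD : T u ≤ T (a (tg u) * 1) := by
    apply hTanti
    rw [mul_one]
    exact hGju
  have hdiv2 : T (a (tg u) * (R * x)) / T (a (tg u) * 1) ≤ T (u * x) / T u :=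
    div_le_div₀ (hT0 _) hTlx hTu hTD
  have heq2 : T (a (tg u) * (R * x)) / T (a (tg u) * 1)
      = tg u * T (a (tg u) * (R * x)) / (tg u * T (a (tg u) * 1)) :=
    (mul_div_mul_left _ _ (ne_of_gt htgu)).symm
  have hlb : x ^ e - ε < T (u * x) / T u := by
    rw [heq2] at hdiv2
    exact lt_of_lt_of_le hLB hdiv2
  rw [Real.dist_eq, abs_lt]
  exact ⟨by linarith, by linarith⟩

theorem stmt_11 {Ω : Type*} [MeasurableSpace Ω] (P : Measure Ω) [IsProbabilityMeasure P]
    (X Y : Ω → ℝ) (hY : ∀ ω, 0 ≤ Y ω)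
    (βinf : ℝ) (hβinf : 0 < βinf) (hX : ∀ ω, 0 ≤ X ω ∧ X ω ≤ βinf)
    (ρ γ : ℝ) (hρ : ρ < 0) (hγ : 0 < γ)
    (α a : ℝ → ℝ) (hαpos : ∀ t, 0 < α t) (hapos : ∀ t, 0 < a t)
    (hαRV : RegVar α ρ) (haRV : RegVar a γ)
    (hYtail : ∀ y : ℝ, 0 < y →
      Tendsto (fun t => t * (P {ω | Y ω > a t * y}).toReal) atTop (𝓝 (y ^ (-(1 / γ)))))
    (μ : Measure (ℝ × ℝ)) (hRadon : RadonCone μ) (hμ : μ ≠ 0)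
    (hconv : VagueConvCone P
      (fun t ω => ((βinf - X ω) / α t, Y ω / a t)) μ) :
    (∀ z : ℝ, 0 < z →
      Tendsto (fun t => t * (P {ω | X ω * Y ω / a t > z}).toReal) atTop
        (𝓝 (z ^ (-(1 / γ)) * βinf ^ (1 / γ)))) ∧
    RegVar (fun x => (P {ω | X ω * Y ω > x}).toReal) (-(1 / γ)) := by
  have hKEY : ∀ z₁ η : ℝ, 0 < z₁ → 0 < η →
      Tendsto (fun t => t * (P {ω | η ≤ βinf - X ω ∧ a t * z₁ < Y ω}).toReal) atTop (𝓝 0) :=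
    fun z₁ η h1 h2 =>
      key_vanish P X Y βinf hρ hγ α a hαpos hapos hαRV hYtail μ hRadon hconv h1 h2
  have h1 := part1 P X Y hY βinf hβinf hX hγ a hapos hYtail hKEY
  refine ⟨h1, ?_⟩
  have hlim : ∀ z : ℝ, 0 < z →
      Tendsto (fun t => t * (P {ω | X ω * Y ω > a t * z}).toReal) atTop
        (𝓝 (z ^ (-(1 / γ)) * βinf ^ (1 / γ))) := by
    intro z hz
    refine (h1 z hz).congr (fun t => ?_)
    have hset : {ω | X ω * Y ω / a t > z} = {ω | X ω * Y ω > a t * z} := by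
      ext ω
      simp only [Set.mem_setOf_eq, gt_iff_lt]
      rw [lt_div_iff₀ (hapos t), mul_comm]
    rw [hset]
  exact tail_rv hγ a hapos haRV (fun u => (P {ω | X ω * Y ω > u}).toReal)
    (fun u => ENNReal.toReal_nonneg)
    (fun u v huv => ENNReal.toReal_mono (measure_ne_top _ _)
      (measure_mono (fun ω hω => lt_of_le_of_lt huv hω)))
    (βinf ^ (1 / γ)) (Real.rpow_pos_of_pos hβinf _) hlim
end

section
/- Let X ~ Beta(1,a) (P[X > x] = (1-x)^a on [0,1], a > 0) and Z independent of X with P[Z > 1 - 1/x] = x^{-b} L(x), b > 0, L slowly varying, and Y = min(X,Z). Let ã(t) = 1/(1 - (1/Ḡ)^{←}(t)) where Ḡ(x) = P[Y > x], so that ã(t)^{a+b}/L(ã(t)) ~ t. Then for all x > y > 0, t·P[1/(1-X) ≤ x·ã(t), 1/(1-Y) > y·ã(t)] → (y^{-a} - x^{-a})·y^{-b} as t → ∞. -/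
open MeasureTheory Filter Topology Set ProbabilityTheory

private lemma aux_alg (C t Lu Lyu p : ℝ) (hLu : Lu ≠ 0) (hp : p ≠ 0) :
    C * ((t / (p / Lu)) * (Lyu / Lu)) = C * (t * Lyu * p⁻¹) := by
  field_simp

theorem stmt_15 {Ω : Type*} [MeasurableSpace Ω] (P : Measure Ω) [IsProbabilityMeasure P]
    (X Z : Ω → ℝ) (hXm : Measurable X) (hZm : Measurable Z)
    (hindep : IndepFun X Z P)
    (a b : ℝ) (ha : 0 < a) (hb : 0 < b)
    (hXrange : ∀ ω, X ω ∈ Icc (0 : ℝ) 1) (hZrange : ∀ ω, Z ω ∈ Icc (0 : ℝ) 1)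
    (hXtail : ∀ x : ℝ, x ∈ Icc (0 : ℝ) 1 → (P {ω | X ω > x}).toReal = (1 - x) ^ a)
    (L : ℝ → ℝ) (hLpos : ∀ x : ℝ, 1 ≤ x → 0 < L x) (hL : RegVar L 0)
    (hZtail : ∀ x : ℝ, 1 ≤ x →
      (P {ω | Z ω > 1 - 1 / x}).toReal = x ^ (-b) * L x)
    -- `Y = min(X,Z)`, `Ḡ` its survival function, and
    -- `ã(t) = 1/(1 - (1/Ḡ)^←(t))` with `(1/Ḡ)^←` the left-continuous inverse
    (Y : Ω → ℝ) (hYdef : Y = fun ω => min (X ω) (Z ω))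
    (Gbar : ℝ → ℝ) (hGbar : Gbar = fun x => (P {ω | Y ω > x}).toReal)
    (atil : ℝ → ℝ)
    (hatil : atil = fun t => 1 / (1 - sInf {s : ℝ | t ≤ 1 / Gbar s})) :
    ∀ x y : ℝ, 0 < y → y < x →
      Tendsto (fun t =>
          t * (P {ω | (1 - X ω)⁻¹ ≤ x * atil t ∧ (1 - Y ω)⁻¹ > y * atil t}).toReal)
        atTop (𝓝 ((y ^ (-a) - x ^ (-a)) * y ^ (-b))) := by
  intro x y hy hyx
  have hx : 0 < x := hy.trans hyx
  set ρ : ℝ := a + b with hρdef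
  have hρ : 0 < ρ := add_pos ha hb
  -- survival function of Y factorizes
  have hYset : ∀ s : ℝ, {ω | Y ω > s} = X ⁻¹' (Ioi s) ∩ Z ⁻¹' (Ioi s) := by
    intro s
    ext ω
    simp [hYdef, lt_min_iff, and_comm]
  have hGprod : ∀ s : ℝ,
      Gbar s = (P {ω | X ω > s}).toReal * (P {ω | Z ω > s}).toReal := by
    intro s
    have hXp : {ω | X ω > s} = X ⁻¹' (Ioi s) := rfl
    have hZp : {ω | Z ω > s} = Z ⁻¹' (Ioi s) := rfl
    rw [hGbar]
    simp only [hYset s, hXp, hZp]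
    rw [hindep.measure_inter_preimage_eq_mul _ _ measurableSet_Ioi measurableSet_Ioi,
      ENNReal.toReal_mul]
  -- explicit form of Gbar near 1
  have hGform : ∀ u : ℝ, 1 ≤ u → Gbar (1 - 1/u) = u ^ (-ρ) * L u := by
    intro u hu
    have hu0 : (0:ℝ) < u := lt_of_lt_of_le one_pos hu
    have hmem : (1 - 1/u) ∈ Icc (0:ℝ) 1 := by
      constructor
      · have : 1/u ≤ 1 := by
          rw [div_le_one hu0]; exact hu
        linarith
      · have : 0 < 1/u := by positivity
        linarith
    have h1 : (P {ω | X ω > (1 - 1/u)}).toReal = u ^ (-a) := by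
      rw [hXtail _ hmem]
      have : (1:ℝ) - (1 - 1/u) = 1/u := by ring
      rw [this, one_div, Real.inv_rpow hu0.le, ← Real.rpow_neg hu0.le]
    have h2 : (P {ω | Z ω > (1 - 1/u)}).toReal = u ^ (-b) * L u := hZtail u hu
    rw [hGprod, h1, h2, ← mul_assoc, ← Real.rpow_add hu0]
    rw [hρdef, neg_add]
  have hGanti : Antitone Gbar := by
    intro s s' hss'
    rw [hGbar]
    have hsub : {ω | Y ω > s'} ⊆ {ω | Y ω > s} := fun ω hω => lt_of_le_of_lt hss' hω
    exact ENNReal.toReal_mono (measure_ne_top P _) (measure_mono hsub)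
  have hGpos : ∀ u : ℝ, 1 ≤ u → 0 < Gbar (1 - 1/u) := by
    intro u hu
    have hu0 : (0:ℝ) < u := lt_of_lt_of_le one_pos hu
    rw [hGform u hu]
    exact mul_pos (Real.rpow_pos_of_pos hu0 _) (hLpos u hu)
  have hGle : ∀ u : ℝ, 1 ≤ u → Gbar (1 - 1/u) ≤ u ^ (-a) := by
    intro u hu
    have hu0 : (0:ℝ) < u := lt_of_lt_of_le one_pos hu
    have hmem : (1 - 1/u) ∈ Icc (0:ℝ) 1 := by
      constructor
      · have : 1/u ≤ 1 := by rw [div_le_one hu0]; exact hu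
        linarith
      · have : 0 < 1/u := by positivity
        linarith
    have hsub : {ω | Y ω > (1 - 1/u)} ⊆ {ω | X ω > (1 - 1/u)} := by
      intro ω hω
      have : Y ω ≤ X ω := by rw [hYdef]; exact min_le_left _ _
      exact lt_of_lt_of_le hω this
    have := ENNReal.toReal_mono (measure_ne_top P _) (measure_mono hsub)
    rw [hGbar]
    calc (P {ω | Y ω > (1 - 1/u)}).toReal ≤ (P {ω | X ω > (1 - 1/u)}).toReal := this
      _ = u ^ (-a) := by
          rw [hXtail _ hmem]
          have : (1:ℝ) - (1 - 1/u) = 1/u := by ring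
          rw [this, one_div, Real.inv_rpow hu0.le, ← Real.rpow_neg hu0.le]
  set h : ℝ → ℝ := fun u => 1 / Gbar (1 - 1/u) with hhdef
  have hpos : ∀ u : ℝ, 1 ≤ u → 0 < h u := fun u hu => by
    simpa [hhdef] using one_div_pos.mpr (hGpos u hu)
  have hmono : ∀ u v : ℝ, 1 ≤ u → u ≤ v → h u ≤ h v := by
    intro u v hu huv
    have hv : (1:ℝ) ≤ v := hu.trans huv
    have hu0 : (0:ℝ) < u := lt_of_lt_of_le one_pos hu
    have hv0 : (0:ℝ) < v := lt_of_lt_of_le one_pos hv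
    have harg : 1 - 1/u ≤ 1 - 1/v := by
      have : 1/v ≤ 1/u := one_div_le_one_div_of_le hu0 huv
      linarith
    have := hGanti harg
    exact one_div_le_one_div_of_le (hGpos v hv) this
  have hlb : ∀ u : ℝ, 1 ≤ u → u ^ a ≤ h u := by
    intro u hu
    have hu0 : (0:ℝ) < u := lt_of_lt_of_le one_pos hu
    have h1 : Gbar (1 - 1/u) ≤ u ^ (-a) := hGle u hu
    have h2 : (0:ℝ) < Gbar (1 - 1/u) := hGpos u hu
    have := one_div_le_one_div_of_le h2 h1
    calc u ^ a = 1 / u ^ (-a) := by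
          rw [Real.rpow_neg hu0.le, one_div, inv_inv]
      _ ≤ 1 / Gbar (1 - 1/u) := this
      _ = h u := rfl
  have hinf : Tendsto h atTop atTop := by
    refine tendsto_atTop_mono' atTop ?_ (tendsto_rpow_atTop ha)
    filter_upwards [eventually_ge_atTop (1:ℝ)] with u hu
    exact hlb u hu
  have hform : ∀ u : ℝ, 1 ≤ u → h u = u ^ ρ / L u := by
    intro u hu
    have hu0 : (0:ℝ) < u := lt_of_lt_of_le one_pos hu
    show 1 / Gbar (1 - 1/u) = u ^ ρ / L u
    rw [hGform u hu, Real.rpow_neg hu0.le, one_div, mul_inv, inv_inv, div_eq_mul_inv]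
  have hRV : ∀ c : ℝ, 0 < c → Tendsto (fun v => h (v * c) / h v) atTop (𝓝 (c ^ ρ)) := by
    intro c hc
    have hLc : Tendsto (fun v => L (v * c) / L v) atTop (𝓝 1) := by
      have := hL c hc
      rwa [Real.rpow_zero] at this
    have hmain : Tendsto (fun v => c ^ ρ * (L (v * c) / L v)⁻¹) atTop (𝓝 (c ^ ρ)) := by
      have h2 : Tendsto (fun v => (L (v * c) / L v)⁻¹) atTop (𝓝 1) := by
        have := hLc.inv₀ one_ne_zero
        simpa using this
      have := h2.const_mul (c ^ ρ)
      simpa using this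
    refine hmain.congr' ?_
    filter_upwards [eventually_ge_atTop (max 1 (1/c))] with v hv
    have hv1 : (1:ℝ) ≤ v := le_trans (le_max_left _ _) hv
    have hv0 : (0:ℝ) < v := lt_of_lt_of_le one_pos hv1
    have hvc : (1:ℝ) ≤ v * c := by
      have h1c : 1/c ≤ v := le_trans (le_max_right _ _) hv
      calc (1:ℝ) = (1/c) * c := by field_simp
        _ ≤ v * c := by
            exact mul_le_mul_of_nonneg_right h1c hc.le
    have hLv : L v ≠ 0 := (hLpos v hv1).ne'
    have hLvc : L (v * c) ≠ 0 := (hLpos _ hvc).ne'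
    have hvρ : (0:ℝ) < v ^ ρ := Real.rpow_pos_of_pos hv0 _
    have hcρ : (0:ℝ) < c ^ ρ := Real.rpow_pos_of_pos hc _
    rw [hform _ hv1, hform _ hvc, Real.mul_rpow hv0.le hc.le]
    field_simp
  -- the set S t and its inf
  have hGneg : ∀ s : ℝ, s < 0 → Gbar s = 1 := by
    intro s hs
    simp only [hGbar]
    have : {ω | Y ω > s} = univ := by
      ext ω
      simp only [mem_setOf_eq, mem_univ, iff_true]
      have hX0 : 0 ≤ X ω := (hXrange ω).1
      have hZ0 : 0 ≤ Z ω := (hZrange ω).1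
      have : 0 ≤ Y ω := by rw [hYdef]; exact le_min hX0 hZ0
      linarith
    rw [this, measure_univ, ENNReal.toReal_one]
  have hGone : ∀ s : ℝ, 1 ≤ s → Gbar s = 0 := by
    intro s hs
    simp only [hGbar]
    have : {ω | Y ω > s} = ∅ := by
      ext ω
      simp only [mem_setOf_eq, mem_empty_iff_false, iff_false, not_lt]
      have hX1 : X ω ≤ 1 := (hXrange ω).2
      have : Y ω ≤ 1 := by
        rw [hYdef]; exact le_trans (min_le_left _ _) hX1
      linarith
    rw [this, measure_empty, ENNReal.toReal_zero]
  have hS_sub : ∀ t : ℝ, 1 < t → {s : ℝ | t ≤ 1 / Gbar s} ⊆ Ico (0:ℝ) 1 := by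
    intro t ht s hs
    simp only [mem_setOf_eq] at hs
    constructor
    · by_contra hneg
      push_neg at hneg
      rw [hGneg s hneg] at hs
      norm_num at hs
      linarith
    · by_contra hge
      push_neg at hge
      rw [hGone s hge] at hs
      norm_num at hs
      linarith
  have hS_ne : ∀ t : ℝ, ∃ s ∈ {s : ℝ | t ≤ 1 / Gbar s}, s ∈ Ico (0:ℝ) 1 := by
    intro t
    obtain ⟨u, hu1, hut⟩ : ∃ u : ℝ, 1 ≤ u ∧ t ≤ h u := by
      have := (hinf.eventually_ge_atTop t).and (eventually_ge_atTop (1:ℝ))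
      obtain ⟨u, h1, h2⟩ := this.exists
      exact ⟨u, h2, h1⟩
    have hu0 : (0:ℝ) < u := lt_of_lt_of_le one_pos hu1
    refine ⟨1 - 1/u, hut, ?_, ?_⟩
    · have : 1/u ≤ 1 := by rw [div_le_one hu0]; exact hu1
      linarith
    · have : 0 < 1/u := by positivity
      linarith
  have hbdd : ∀ t : ℝ, 1 < t → BddBelow {s : ℝ | t ≤ 1 / Gbar s} := by
    intro t ht
    exact ⟨0, fun s hs => (hS_sub t ht hs).1⟩
  have hσ : ∀ t : ℝ, 1 < t →
      0 ≤ sInf {s : ℝ | t ≤ 1 / Gbar s} ∧ sInf {s : ℝ | t ≤ 1 / Gbar s} < 1 := by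
    intro t ht
    obtain ⟨s₀, hs₀S, hs₀I⟩ := hS_ne t
    constructor
    · exact le_csInf ⟨s₀, hs₀S⟩ fun s hs => (hS_sub t ht hs).1
    · exact lt_of_le_of_lt (csInf_le (hbdd t ht) hs₀S) hs₀I.2
  have hu_ge : ∀ t : ℝ, 1 < t → 1 ≤ atil t := by
    intro t ht
    obtain ⟨h0, h1⟩ := hσ t ht
    rw [hatil]
    have h2 : 0 < 1 - sInf {s : ℝ | t ≤ 1 / Gbar s} := by linarith
    exact one_le_one_div h2 (by linarith)
  have hu_eq : ∀ t : ℝ, 1 < t → 1 - 1 / atil t = sInf {s : ℝ | t ≤ 1 / Gbar s} := by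
    intro t ht
    obtain ⟨h0, h1⟩ := hσ t ht
    rw [hatil]
    have h2 : (1:ℝ) - sInf {s : ℝ | t ≤ 1 / Gbar s} ≠ 0 := by linarith
    rw [one_div_one_div]
    ring
  have hu_inf : Tendsto atil atTop atTop := by
    rw [tendsto_atTop]
    intro M
    set u₀ : ℝ := max M 1 with hu₀def
    have hu₀1 : (1:ℝ) ≤ u₀ := le_max_right _ _
    have hu₀0 : (0:ℝ) < u₀ := lt_of_lt_of_le one_pos hu₀1
    filter_upwards [eventually_gt_atTop (1:ℝ), eventually_gt_atTop (h u₀)] with t ht1 htu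
    have hlow : 1 - 1/u₀ ≤ sInf {s : ℝ | t ≤ 1 / Gbar s} := by
      obtain ⟨s₀, hs₀S, _⟩ := hS_ne t
      refine le_csInf ⟨s₀, hs₀S⟩ ?_
      intro s hs
      simp only [mem_setOf_eq] at hs
      by_contra hcon
      push_neg at hcon
      have hsI := hS_sub t ht1 hs
      have hGs : Gbar (1 - 1/u₀) ≤ Gbar s := hGanti hcon.le
      have hGs0 : 0 < Gbar s := lt_of_lt_of_le (hGpos u₀ hu₀1) hGs
      have : 1 / Gbar s ≤ h u₀ := one_div_le_one_div_of_le (hGpos u₀ hu₀1) hGs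
      linarith
    obtain ⟨h0, h1σ⟩ := hσ t ht1
    have h2 : 0 < 1 - sInf {s : ℝ | t ≤ 1 / Gbar s} := by linarith
    have h3 : 1 - sInf {s : ℝ | t ≤ 1 / Gbar s} ≤ 1/u₀ := by linarith
    have : u₀ ≤ atil t := by
      rw [hatil]
      calc u₀ = 1 / (1/u₀) := by rw [one_div_one_div]
        _ ≤ 1 / (1 - sInf {s : ℝ | t ≤ 1 / Gbar s}) := one_div_le_one_div_of_le h2 h3
    exact le_trans (le_max_left _ _) this
  -- key inverse bounds
  have hupper : ∀ t : ℝ, 1 < t → ∀ v : ℝ, 1 ≤ v → v < atil t → h v < t := by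
    intro t ht v hv1 hvu
    have hv0 : (0:ℝ) < v := lt_of_lt_of_le one_pos hv1
    obtain ⟨h0, h1σ⟩ := hσ t ht
    have h2 : 0 < 1 - sInf {s : ℝ | t ≤ 1 / Gbar s} := by linarith
    have hσv : 1 - 1/v < sInf {s : ℝ | t ≤ 1 / Gbar s} := by
      rw [hatil] at hvu
      have : 1 - sInf {s : ℝ | t ≤ 1 / Gbar s} < 1/v := by
        rw [← lt_one_div hv0 h2]
        exact hvu
      linarith
    by_contra hcon
    push_neg at hcon
    have : (1 - 1/v) ∈ {s : ℝ | t ≤ 1 / Gbar s} := hcon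
    have := csInf_le (hbdd t ht) this
    linarith
  have hlower : ∀ t : ℝ, 1 < t → ∀ lam : ℝ, 1 < lam → t ≤ h (atil t * lam) := by
    intro t ht lam hlam
    obtain ⟨h0, h1σ⟩ := hσ t ht
    set σ := sInf {s : ℝ | t ≤ 1 / Gbar s} with hσdef
    have h2 : 0 < 1 - σ := by linarith
    have hlam0 : (0:ℝ) < lam := lt_trans one_pos hlam
    have hδ : 0 < (1 - σ) * (1 - 1/lam) := by
      apply mul_pos h2
      have : 1/lam < 1 := by rw [div_lt_one hlam0]; exact hlam
      linarith
    obtain ⟨s₀, hs₀S, _⟩ := hS_ne t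
    obtain ⟨s, hsS, hslt⟩ := Real.lt_sInf_add_pos ⟨s₀, hs₀S⟩ hδ
    have hsI := hS_sub t ht hsS
    have hs1 : 0 < 1 - s := by linarith [hsI.2]
    set v := 1 / (1 - s) with hvdef
    have hv1 : (1:ℝ) ≤ v := by
      rw [hvdef]
      exact one_le_one_div hs1 (by linarith [hsI.1])
    have hsv : 1 - 1/v = s := by
      rw [hvdef, one_div_one_div]; ring
    have htv : t ≤ h v := by
      show t ≤ 1 / Gbar (1 - 1/v)
      rw [hsv]
      exact hsS
    have hvle : v ≤ atil t * lam := by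
      have hkey : (1 - σ)/lam < 1 - s := by
        have : s < σ + (1 - σ) * (1 - 1/lam) := hslt
        have hexp : σ + (1 - σ) * (1 - 1/lam) = 1 - (1-σ)/lam := by
          field_simp
          ring
        rw [hexp] at this
        linarith
      have hql : 0 < (1 - σ)/lam := div_pos h2 hlam0
      rw [hvdef]
      calc 1/(1-s) ≤ 1/((1-σ)/lam) := one_div_le_one_div_of_le hql hkey.le
        _ = lam / (1 - σ) := by rw [one_div_div]
        _ = atil t * lam := by rw [hatil]; field_simp; rw [← hσdef, div_self h2.ne']
    exact le_trans htv (hmono v (atil t * lam) hv1 hvle)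
  have hHt : Tendsto (fun t => h (atil t) / t) atTop (𝓝 1) := by
    rw [Metric.tendsto_nhds]
    intro ε hε
    set m : ℝ := 1 + min (ε/2) (1/2) with hmdef
    have hδ0 : 0 < min (ε/2) (1/2) := lt_min (by linarith) (by norm_num)
    have hδε : min (ε/2) (1/2) ≤ ε/2 := min_le_left _ _
    have hm1 : 1 < m := by rw [hmdef]; linarith
    have hm0 : (0:ℝ) < m := lt_trans one_pos hm1
    set lam : ℝ := m ^ (1/ρ) with hlamdef
    have hlam1 : 1 < lam := by
      rw [hlamdef, Real.one_lt_rpow_iff hm0.le]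
      exact Or.inl ⟨hm1, by positivity⟩
    have hlam0 : (0:ℝ) < lam := lt_trans one_pos hlam1
    have hlamρ : lam ^ ρ = m := by
      rw [hlamdef, ← Real.rpow_mul hm0.le, one_div_mul_cancel hρ.ne', Real.rpow_one]
    have hRVlam := hRV lam hlam0
    rw [hlamρ] at hRVlam
    have hF1 : Tendsto (fun t => h (atil t / lam * lam) / h (atil t / lam)) atTop (𝓝 m) :=
      hRVlam.comp (hu_inf.atTop_div_const hlam0)
    have hF2 : Tendsto (fun t => (h (atil t * lam) / h (atil t))⁻¹) atTop (𝓝 m⁻¹) :=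
      (hRVlam.comp hu_inf).inv₀ hm0.ne'
    have hm_ub : m < 1 + ε := by rw [hmdef]; linarith
    have hm_lb : 1 - ε < m⁻¹ := by
      rcases le_or_gt ε 1 with hε1 | hε1
      · have hkey : (1 - ε) * m < 1 := by
          rw [hmdef]
          nlinarith [hδ0, hδε]
        rw [← one_div m, lt_div_iff₀ hm0]
        exact hkey
      · have : (0:ℝ) < m⁻¹ := by positivity
        linarith
    have hev1 := hF1.eventually_lt_const hm_ub
    have hev2 := hF2.eventually_const_lt hm_lb
    filter_upwards [hev1, hev2, eventually_gt_atTop (1:ℝ),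
      hu_inf.eventually_ge_atTop lam] with t h1 h2 ht hul
    have hu1 : 1 ≤ atil t := hu_ge t ht
    have ht0 : (0:ℝ) < t := lt_trans one_pos ht
    have hv1 : 1 ≤ atil t / lam := (one_le_div hlam0).mpr hul
    have hvlt : atil t / lam < atil t := div_lt_self (by linarith) hlam1
    have hhv : h (atil t / lam) < t := hupper t ht _ hv1 hvlt
    have hhv0 : 0 < h (atil t / lam) := hpos _ hv1
    have huplam : t ≤ h (atil t * lam) := hlower t ht lam hlam1
    have hval_pos : 0 < h (atil t) := hpos _ hu1
    have hUB : h (atil t) / t ≤ h (atil t / lam * lam) / h (atil t / lam) := by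
      have harg : atil t / lam * lam = atil t := div_mul_cancel₀ _ hlam0.ne'
      rw [harg]
      exact div_le_div_of_nonneg_left hval_pos.le hhv0 hhv.le
    have hLB : (h (atil t * lam) / h (atil t))⁻¹ ≤ h (atil t) / t := by
      rw [inv_div]
      exact div_le_div_of_nonneg_left hval_pos.le ht0 huplam
    rw [Real.dist_eq, abs_sub_lt_iff]
    constructor <;> linarith
  have hC6 : Tendsto (fun t => t / h (atil t)) atTop (𝓝 1) := by
    have heq : (fun t => t / h (atil t)) = fun t => (h (atil t) / t)⁻¹ := by
      funext t; rw [inv_div]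
    rw [heq]
    simpa using hHt.inv₀ one_ne_zero
  -- slowly varying correction
  have hLcorr : Tendsto (fun t => L (atil t * y) / L (atil t)) atTop (𝓝 1) := by
    have := hL y hy
    rw [Real.rpow_zero] at this
    exact this.comp hu_inf
  -- the probability identity, eventually in t
  have hkey : ∀ᶠ t in atTop,
      t * (P {ω | (1 - X ω)⁻¹ ≤ x * atil t ∧ (1 - Y ω)⁻¹ > y * atil t}).toReal
        = ((y ^ (-a) - x ^ (-a)) * y ^ (-b)) *
          ((t / h (atil t)) * (L (atil t * y) / L (atil t))) := by
    have hN : P {ω | X ω = 1} = 0 := by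
      have hseq : ∀ n : ℕ, (P {ω | X ω = 1}).toReal ≤ (1/((n:ℝ)+1))^a := by
        intro n
        have hn0 : (0:ℝ) < (n:ℝ) + 1 := by positivity
        have hq0 : (0:ℝ) < 1/((n:ℝ)+1) := by positivity
        have hq1 : 1/((n:ℝ)+1) ≤ 1 := by
          rw [div_le_one hn0]; linarith [Nat.cast_nonneg (α := ℝ) n]
        have hmem : (1 - 1/((n:ℝ)+1)) ∈ Icc (0:ℝ) 1 := ⟨by linarith, by linarith⟩
        have hsub : {ω | X ω = 1} ⊆ {ω | X ω > 1 - 1/((n:ℝ)+1)} := by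
          intro ω hω
          simp only [mem_setOf_eq] at hω ⊢
          rw [hω]; linarith
        calc (P {ω | X ω = 1}).toReal
            ≤ (P {ω | X ω > 1 - 1/((n:ℝ)+1)}).toReal :=
              ENNReal.toReal_mono (measure_ne_top P _) (measure_mono hsub)
          _ = (1/((n:ℝ)+1))^a := by
              rw [hXtail _ hmem]
              congr 1
              ring
      have hlim : Tendsto (fun n : ℕ => (1/((n:ℝ)+1))^a) atTop (𝓝 0) := by
        have h0 := tendsto_one_div_add_atTop_nhds_zero_nat (𝕜 := ℝ)
        have := h0.rpow_const (Or.inr ha.le)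
        rwa [Real.zero_rpow ha.ne'] at this
      have h0' : (P {ω | X ω = 1}).toReal ≤ 0 := ge_of_tendsto' hlim hseq
      have h0'' : (P {ω | X ω = 1}).toReal = 0 := le_antisymm h0' ENNReal.toReal_nonneg
      rcases (ENNReal.toReal_eq_zero_iff _).mp h0'' with h | h
      · exact h
      · exact absurd h (measure_ne_top P _)
    filter_upwards [eventually_gt_atTop (1:ℝ),
      hu_inf.eventually_ge_atTop (max 1 (1/y))] with t ht hul
    set u := atil t with hudef
    have hu1 : (1:ℝ) ≤ u := le_trans (le_max_left _ _) hul
    have hu0 : (0:ℝ) < u := lt_of_lt_of_le one_pos hu1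
    have hyu1 : (1:ℝ) ≤ y * u := by
      have h1y : 1/y ≤ u := le_trans (le_max_right _ _) hul
      calc (1:ℝ) = y * (1/y) := by field_simp
        _ ≤ y * u := mul_le_mul_of_nonneg_left h1y hy.le
    have hyu0 : (0:ℝ) < y * u := lt_of_lt_of_le one_pos hyu1
    have hyxu : y * u < x * u := by nlinarith
    have hxu1 : (1:ℝ) ≤ x * u := le_trans hyu1 hyxu.le
    have hxu0 : (0:ℝ) < x * u := lt_of_lt_of_le one_pos hxu1
    set c : ℝ := 1 - 1/(y*u) with hcdef
    set d : ℝ := 1 - 1/(x*u) with hddef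
    have h1c : 1 - c = 1/(y*u) := by rw [hcdef]; ring
    have h1d : 1 - d = 1/(x*u) := by rw [hddef]; ring
    have hcd : c < d := by
      have : 1/(x*u) < 1/(y*u) := one_div_lt_one_div_of_lt hyu0 hyxu
      rw [hcdef, hddef]; linarith
    have hqy0 : (0:ℝ) < 1/(y*u) := by positivity
    have hqy1 : 1/(y*u) ≤ 1 := by rw [div_le_one hyu0]; exact hyu1
    have hqx0 : (0:ℝ) < 1/(x*u) := by positivity
    have hqx1 : 1/(x*u) ≤ 1 := by rw [div_le_one hxu0]; exact hxu1
    have hc01 : c ∈ Icc (0:ℝ) 1 := ⟨by rw [hcdef]; linarith, by rw [hcdef]; linarith⟩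
    have hd01 : d ∈ Icc (0:ℝ) 1 := ⟨by rw [hddef]; linarith, by rw [hddef]; linarith⟩
    have hd1 : d < 1 := by rw [hddef]; linarith
    clear_value u c d
    -- event identification
    have hsub1 : X ⁻¹' (Ioc c d) ∩ Z ⁻¹' (Ioi c) ⊆
        {ω | (1 - X ω)⁻¹ ≤ x * u ∧ (1 - Y ω)⁻¹ > y * u} := by
      rintro ω ⟨hA, hB⟩
      simp only [mem_preimage, mem_Ioc, mem_Ioi] at hA hB
      simp only [mem_setOf_eq]
      have hXd : X ω ≤ d := hA.2
      have h1X : 1/(x*u) ≤ 1 - X ω := by linarith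
      have hYc : c < Y ω := by rw [hYdef]; exact lt_min hA.1 hB
      have hYd : Y ω ≤ X ω := by rw [hYdef]; exact min_le_left _ _
      have h1Y0 : 0 < 1 - Y ω := by linarith
      have h1Yc : 1 - Y ω < 1/(y*u) := by linarith
      constructor
      · have := one_div_le_one_div_of_le hqx0 h1X
        rw [one_div_one_div] at this
        rw [inv_eq_one_div]
        exact this
      · have := one_div_lt_one_div_of_lt h1Y0 h1Yc
        rw [one_div_one_div] at this
        rw [gt_iff_lt, inv_eq_one_div]
        exact this
    have hsub2 : {ω | (1 - X ω)⁻¹ ≤ x * u ∧ (1 - Y ω)⁻¹ > y * u} ⊆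
        (X ⁻¹' (Ioc c d) ∩ Z ⁻¹' (Ioi c)) ∪ {ω | X ω = 1} := by
      intro ω hω
      simp only [mem_setOf_eq] at hω
      obtain ⟨hω1, hω2⟩ := hω
      by_cases hX1 : X ω = 1
      · exact Or.inr hX1
      · left
        have hXlt : X ω < 1 := lt_of_le_of_ne (hXrange ω).2 hX1
        have h1X0 : 0 < 1 - X ω := by linarith
        have hXd : X ω ≤ d := by
          rw [inv_eq_one_div] at hω1
          have := (one_div_le h1X0 hxu0).mp hω1
          rw [hddef]; linarith
        have hYle : Y ω ≤ X ω := by rw [hYdef]; exact min_le_left _ _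
        have hY1 : Y ω < 1 := lt_of_le_of_lt hYle hXlt
        have h1Y0 : 0 < 1 - Y ω := by linarith
        have hYc : c < Y ω := by
          rw [gt_iff_lt, inv_eq_one_div, lt_one_div hyu0 h1Y0] at hω2
          rw [hcdef]; linarith
        have hXc : c < X ω := lt_of_lt_of_le hYc hYle
        have hZY : Y ω ≤ Z ω := by rw [hYdef]; exact min_le_right _ _
        have hZc : c < Z ω := lt_of_lt_of_le hYc hZY
        exact ⟨⟨hXc, hXd⟩, hZc⟩
    have hPE : P {ω | (1 - X ω)⁻¹ ≤ x * u ∧ (1 - Y ω)⁻¹ > y * u}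
        = P (X ⁻¹' (Ioc c d) ∩ Z ⁻¹' (Ioi c)) := by
      refine le_antisymm ?_ (measure_mono hsub1)
      refine le_trans (measure_mono hsub2) ?_
      refine le_trans (measure_union_le _ _) ?_
      rw [hN, add_zero]
    have hprod : P (X ⁻¹' (Ioc c d) ∩ Z ⁻¹' (Ioi c))
        = P (X ⁻¹' (Ioc c d)) * P (Z ⁻¹' (Ioi c)) :=
      hindep.measure_inter_preimage_eq_mul _ _ measurableSet_Ioc measurableSet_Ioi
    have hmonoXd : X ⁻¹' (Ioi d) ⊆ X ⁻¹' (Ioi c) := preimage_mono (Ioi_subset_Ioi hcd.le)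
    have hPA : (P (X ⁻¹' (Ioc c d))).toReal = (1/(y*u))^a - (1/(x*u))^a := by
      have hdiff : X ⁻¹' (Ioc c d) = X ⁻¹' (Ioi c) \ X ⁻¹' (Ioi d) := by
        rw [← preimage_diff, Ioi_diff_Ioi]
      rw [hdiff, measure_diff hmonoXd
        (hXm measurableSet_Ioi).nullMeasurableSet (measure_ne_top P _),
        ENNReal.toReal_sub_of_le (measure_mono hmonoXd) (measure_ne_top P _)]
      have e1 : X ⁻¹' (Ioi c) = {ω | X ω > c} := rfl
      have e2 : X ⁻¹' (Ioi d) = {ω | X ω > d} := rfl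
      rw [e1, e2, hXtail c hc01, hXtail d hd01, h1c, h1d]
    have hPB : (P (Z ⁻¹' (Ioi c))).toReal = (y*u)^(-b) * L (y*u) := by
      have e3 : Z ⁻¹' (Ioi c) = {ω | Z ω > 1 - 1/(y*u)} := by rw [hcdef]; rfl
      rw [e3]
      exact hZtail (y*u) hyu1
    have hLHS : (P {ω | (1 - X ω)⁻¹ ≤ x * u ∧ (1 - Y ω)⁻¹ > y * u}).toReal
        = ((1/(y*u))^a - (1/(x*u))^a) * ((y*u)^(-b) * L (y*u)) := by
      rw [hPE, hprod, ENNReal.toReal_mul, hPA, hPB]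
    -- rpow algebra
    have ea : (1/(y*u))^a = y^(-a) * u^(-a) := by
      rw [one_div, Real.inv_rpow (le_of_lt hyu0), ← Real.rpow_neg (le_of_lt hyu0),
        Real.mul_rpow hy.le hu0.le]
    have eb : (1/(x*u))^a = x^(-a) * u^(-a) := by
      rw [one_div, Real.inv_rpow (le_of_lt hxu0), ← Real.rpow_neg (le_of_lt hxu0),
        Real.mul_rpow hx.le hu0.le]
    have ec : (y*u)^(-b) = y^(-b) * u^(-b) := Real.mul_rpow hy.le hu0.le
    have ed : u^(-a) * u^(-b) = (u^ρ)⁻¹ := by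
      rw [← Real.rpow_add hu0, show -a + -b = -ρ by rw [hρdef]; ring,
        Real.rpow_neg hu0.le]
    have hh : h u = u^ρ/L u := hform u hu1
    have hLu : L u ≠ 0 := (hLpos u hu1).ne'
    have huρ : (0:ℝ) < u^ρ := Real.rpow_pos_of_pos hu0 _
    have hRHSval : ((y^(-a) - x^(-a)) * y^(-b)) * ((t / h u) * (L (u*y)/L u))
        = ((y^(-a) - x^(-a)) * y^(-b)) * (t * L (y*u) * (u^(-a) * u^(-b))) := by
      rw [hh, mul_comm u y, ed]
      exact aux_alg _ _ _ _ _ hLu huρ.ne'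
    rw [hLHS, ea, eb, ec, hRHSval]
    ring
  have hlim : Tendsto (fun t => ((y ^ (-a) - x ^ (-a)) * y ^ (-b)) *
      ((t / h (atil t)) * (L (atil t * y) / L (atil t)))) atTop
      (𝓝 ((y ^ (-a) - x ^ (-a)) * y ^ (-b))) := by
    have h1 := (hC6.mul hLcorr).const_mul ((y ^ (-a) - x ^ (-a)) * y ^ (-b))
    rw [show ((y ^ (-a) - x ^ (-a)) * y ^ (-b)) * (1 * 1)
      = (y ^ (-a) - x ^ (-a)) * y ^ (-b) by ring] at h1
    exact h1
  exact hlim.congr' (hkey.mono fun t ht => ht.symm)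
end
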